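/- arXiv:1701.03182 — 2 statements merged into one kernel-verified Lean document; each statement's English description precedes it below -/
import Mathlib

section
/- For every C⁴ complex-valued function u on an open subset of ℝ^{2n+1}, the identity ½ Σ_{j,k=1}^n ( Z̄_jZ̄_k(Z_jZ_k u) + Z_jZ_k(Z̄_jZ̄_k u) ) = L_{−√(n(n+2))}( L_{√(n(n+2))} u ) holds pointwise. -/
open Set Matrix MeasureTheory

noncomputable section

/-- The underlying space of the `n`-th Heisenberg group: `ℝ^(2n+1)` with coordinates
`(x_1,…,x_n,y_1,…,y_n,t)`. -/
abbrev Heis (n : ℕ) := Fin (2*n+1) → ℝ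

/-- Index of the coordinate `x_j`. -/
def xIdx {n : ℕ} (j : Fin n) : Fin (2*n+1) := ⟨j.1, by have := j.2; omega⟩

/-- Index of the coordinate `y_j`. -/
def yIdx {n : ℕ} (j : Fin n) : Fin (2*n+1) := ⟨n + j.1, by have := j.2; omega⟩

/-- Index of the coordinate `t`. -/
def tIdx {n : ℕ} : Fin (2*n+1) := ⟨2*n, by omega⟩

/-- The index `k ∈ {1,…,2n}` viewed inside `{1,…,2n+1}`. -/
def hIdx {n : ℕ} (k : Fin (2*n)) : Fin (2*n+1) := ⟨k.1, by have := k.2; omega⟩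

variable {n : ℕ} {E : Type*} [NormedAddCommGroup E] [NormedSpace ℝ E]

/-- Partial derivative `∂u/∂p_i`. -/
def pd (i : Fin (2*n+1)) (u : Heis n → E) (p : Heis n) : E :=
  fderiv ℝ u p (Pi.single i 1)

/-- The left-invariant vector field `X_j = ∂/∂x_j + 2 y_j ∂/∂t` as a differential operator. -/
def Xop (j : Fin n) (u : Heis n → E) (p : Heis n) : E :=
  pd (xIdx j) u p + (2 * p (yIdx j)) • pd tIdx u p

/-- The left-invariant vector field `Y_j = ∂/∂y_j - 2 x_j ∂/∂t` as a differential operator. -/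
def Yop (j : Fin n) (u : Heis n → E) (p : Heis n) : E :=
  pd (yIdx j) u p - (2 * p (xIdx j)) • pd tIdx u p

/-- The vector field `T = ∂/∂t`. -/
def Tvf (u : Heis n → E) (p : Heis n) : E := pd tIdx u p

/-- `X_k` for `k = 1,…,2n`, where `X_{n+j} = Y_j`. -/
def XYop (k : Fin (2*n)) (u : Heis n → E) (p : Heis n) : E :=
  if h : (k : ℕ) < n then Xop ⟨k.1, h⟩ u p
  else Yop ⟨k.1 - n, by have := k.2; omega⟩ u p

/-- The right-invariant mirror `X̃_j = X_j - 4 y_j T`. -/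
def Xtilde (j : Fin n) (u : Heis n → E) (p : Heis n) : E :=
  Xop j u p - (4 * p (yIdx j)) • Tvf u p

/-- The right-invariant mirror `Ỹ_j = Y_j + 4 x_j T`. -/
def Ytilde (j : Fin n) (u : Heis n → E) (p : Heis n) : E :=
  Yop j u p + (4 * p (xIdx j)) • Tvf u p

/-- The complexified horizontal operator `Z_j = ½(X_j - i Y_j)`. -/
def Zop (j : Fin n) (u : Heis n → ℂ) (p : Heis n) : ℂ :=
  (1/2 : ℂ) * (Xop j u p - Complex.I * Yop j u p)

/-- The complexified horizontal operator `Z̄_j = ½(X_j + i Y_j)`. -/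
def Zbar (j : Fin n) (u : Heis n → ℂ) (p : Heis n) : ℂ :=
  (1/2 : ℂ) * (Xop j u p + Complex.I * Yop j u p)

/-- The operator `L_c = -¼ Σ_j (X_j² + Y_j²) + c T`. -/
def Lop (c : ℝ) (u : Heis n → ℂ) (p : Heis n) : ℂ :=
  -(1/4 : ℂ) * (∑ j : Fin n, (Xop j (Xop j u) p + Yop j (Yop j u) p)) + (c : ℂ) * Tvf u p

/-- The Heisenberg group law
`(x,y,t)*(x',y',t') = (x+x', y+y', t+t'-2x·y'+2x'·y)`. -/
def hmul (p q : Heis n) : Heis n := fun i =>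
  if (i : ℕ) < 2*n then p i + q i
  else p i + q i - 2 * ∑ j : Fin n, p (xIdx j) * q (yIdx j)
    + 2 * ∑ j : Fin n, q (xIdx j) * p (yIdx j)

/-- The point `exp(s X_j) = (s e_j, 0, 0)`. -/
def expX (j : Fin n) (s : ℝ) : Heis n := fun i => if i = xIdx j then s else 0

/-- The point `exp(s Y_j) = (0, s e_j, 0)`. -/
def expY (j : Fin n) (s : ℝ) : Heis n := fun i => if i = yIdx j then s else 0

/-- The point `exp(s T) = (0, 0, s)`. -/
def expT {n : ℕ} (s : ℝ) : Heis n := fun i => if i = tIdx then s else 0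

/-- The standard contact form `α = dt + 2 Σ_k (x_k dy_k - y_k dx_k)` evaluated at the point `p`
on the tangent vector `v`. -/
def alphaForm (p v : Heis n) : ℝ :=
  v tIdx + 2 * ∑ j : Fin n, (p (xIdx j) * v (yIdx j) - p (yIdx j) * v (xIdx j))

/-- `F` is a contact map on `U` with (positive) contact factor `lam`: `F^*α = lam · α`. -/
def IsContact (U : Set (Heis n)) (F : Heis n → Heis n) (lam : Heis n → ℝ) : Prop :=
  (∀ p ∈ U, 0 < lam p) ∧
  ∀ p ∈ U, ∀ v : Heis n, alphaForm (F p) (fderiv ℝ F p v) = lam p * alphaForm p v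

/-- The horizontal differential `D₀F`, the `2n × 2n` matrix with entries `(D₀F)_{m,ℓ} = X_ℓ f_m`. -/
def D0 (F : Heis n → Heis n) (p : Heis n) : Matrix (Fin (2*n)) (Fin (2*n)) ℝ :=
  Matrix.of fun m ℓ => XYop ℓ (fun q => F q (hIdx m)) p

/-- The horizontal Jacobian `J₀F = det D₀F`. -/
def J0 (F : Heis n → Heis n) (p : Heis n) : ℝ := (D0 F p).det

/-- `F` is conformal on `U` with contact factor `lam`: `F` is contact, `J₀F > 0`, and
`(D₀F)ᵀ (D₀F) = (J₀F)^{1/n} I_{2n}`. -/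
def IsConformal (U : Set (Heis n)) (F : Heis n → Heis n) (lam : Heis n → ℝ) : Prop :=
  IsContact U F lam ∧ (∀ p ∈ U, 0 < J0 F p) ∧
  ∀ p ∈ U, (D0 F p)ᵀ * (D0 F p) = (J0 F p ^ (1 / (n : ℝ))) • (1 : Matrix (Fin (2*n)) (Fin (2*n)) ℝ)

/-- The full Jacobian matrix of `F : ℝ^{2n+1} → ℝ^{2n+1}` at `p`. -/
def fullJac (F : Heis n → Heis n) (p : Heis n) : Matrix (Fin (2*n+1)) (Fin (2*n+1)) ℝ :=
  Matrix.of fun i j => pd j (fun q => F q i) p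

end

noncomputable section
namespace ZZaux
open Complex

variable {n : ℕ} {V : Set (Heis n)} {p : Heis n} {f g v : Heis n → ℂ}

/- ## Index lemmas -/
@[simp] lemma xIdx_eq_xIdx {j k : Fin n} : xIdx j = xIdx k ↔ j = k := by
  simp [xIdx, Fin.ext_iff]
@[simp] lemma yIdx_eq_yIdx {j k : Fin n} : yIdx j = yIdx k ↔ j = k := by
  simp [yIdx, Fin.ext_iff]
@[simp] lemma xIdx_ne_yIdx {j k : Fin n} : xIdx j ≠ yIdx k := by
  have := j.2; simp [xIdx, yIdx, Fin.ext_iff]; omega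
@[simp] lemma yIdx_ne_xIdx {j k : Fin n} : yIdx j ≠ xIdx k := by
  have := k.2; simp [xIdx, yIdx, Fin.ext_iff]; omega
@[simp] lemma xIdx_ne_tIdx {j : Fin n} : xIdx j ≠ tIdx := by
  have := j.2; simp [xIdx, tIdx, Fin.ext_iff]; omega
@[simp] lemma tIdx_ne_xIdx {j : Fin n} : tIdx ≠ xIdx j := by
  have := j.2; simp [xIdx, tIdx, Fin.ext_iff]; omega
@[simp] lemma yIdx_ne_tIdx {j : Fin n} : yIdx j ≠ tIdx := by
  have := j.2; simp [yIdx, tIdx, Fin.ext_iff]; omega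
@[simp] lemma tIdx_ne_yIdx {j : Fin n} : tIdx ≠ yIdx j := by
  have := j.2; simp [yIdx, tIdx, Fin.ext_iff]; omega

/- ## pd basics -/
lemma pd_congr (hV : IsOpen V) (i : Fin (2*n+1)) (h : ∀ q ∈ V, f q = g q) (hp : p ∈ V) :
    pd i f p = pd i g p := by
  unfold pd
  rw [Filter.EventuallyEq.fderiv_eq (Filter.eventuallyEq_of_mem (hV.mem_nhds hp) h)]

lemma pd_add (i : Fin (2*n+1)) (hf : DifferentiableAt ℝ f p) (hg : DifferentiableAt ℝ g p) :
    pd i (fun q => f q + g q) p = pd i f p + pd i g p := by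
  unfold pd; rw [fderiv_fun_add hf hg]; simp

lemma pd_const_mul (i : Fin (2*n+1)) (c : ℂ) (hf : DifferentiableAt ℝ f p) :
    pd i (fun q => c * f q) p = c * pd i f p := by
  unfold pd; rw [fderiv_const_mul hf c]; simp

lemma pd_sub (i : Fin (2*n+1)) (hf : DifferentiableAt ℝ f p) (hg : DifferentiableAt ℝ g p) :
    pd i (fun q => f q - g q) p = pd i f p - pd i g p := by
  unfold pd; rw [fderiv_fun_sub hf hg]; simp

lemma pd_sum {ι : Type*} (i : Fin (2*n+1)) (s : Finset ι) (F : ι → Heis n → ℂ)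
    (hf : ∀ k ∈ s, DifferentiableAt ℝ (F k) p) :
    pd i (fun q => ∑ k ∈ s, F k q) p = ∑ k ∈ s, pd i (F k) p := by
  unfold pd; rw [fderiv_fun_sum hf]; simp

lemma pd_mul (i : Fin (2*n+1)) (hf : DifferentiableAt ℝ f p) (hg : DifferentiableAt ℝ g p) :
    pd i (fun q => f q * g q) p = pd i f p * g p + f p * pd i g p := by
  unfold pd; rw [fderiv_fun_mul hf hg]; simp [smul_eq_mul]; ring

lemma differentiableAt_coordC (l : Fin (2*n+1)) :
    DifferentiableAt ℝ (fun q : Heis n => (q l : ℂ)) p := by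
  exact Complex.ofRealCLM.differentiableAt.comp p
    (ContinuousLinearMap.proj (R := ℝ) (φ := fun _ : Fin (2*n+1) => ℝ) l).differentiableAt

lemma pd_coordC (i l : Fin (2*n+1)) :
    pd i (fun q : Heis n => (q l : ℂ)) p = if l = i then 1 else 0 := by
  unfold pd
  rw [show (fun q : Heis n => (q l : ℂ))
      = ⇑(Complex.ofRealCLM.comp (ContinuousLinearMap.proj (R := ℝ)
        (φ := fun _ : Fin (2*n+1) => ℝ) l)) from rfl, ContinuousLinearMap.fderiv]
  simp [Pi.single_apply]
  split <;> simp



variable {n : ℕ} {V : Set (Heis n)} {p : Heis n} {f g v : Heis n → ℂ}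
variable {m m' : WithTop ℕ∞}

lemma diffAt {E : Type*} [NormedAddCommGroup E] [NormedSpace ℝ E] {F : Heis n → E}
    (hV : IsOpen V) (h : ContDiffOn ℝ m F V) (hm : 1 ≤ m) (hp : p ∈ V) :
    DifferentiableAt ℝ F p :=
  (h.differentiableOn (zero_lt_one.trans_le hm).ne').differentiableAt (hV.mem_nhds hp)

lemma contDiffOn_pd (hV : IsOpen V) (i : Fin (2*n+1)) (h : ContDiffOn ℝ m' f V)
    (hm : m + 1 ≤ m') : ContDiffOn ℝ m (pd i f) V := by
  have h1 : ContDiffOn ℝ m (fderiv ℝ f) V := h.fderiv_of_isOpen hV hm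
  exact (ContinuousLinearMap.apply ℝ ℂ (Pi.single i (1:ℝ))).contDiff.comp_contDiffOn h1

lemma contDiffOn_coordC (l : Fin (2*n+1)) :
    ContDiffOn ℝ m (fun q : Heis n => (q l : ℂ)) V :=
  ((Complex.ofRealCLM.comp (ContinuousLinearMap.proj (R := ℝ)
    (φ := fun _ : Fin (2*n+1) => ℝ) l)).contDiff).contDiffOn

/- ## Schwarz symmetry -/
lemma pd_pd_comm (hV : IsOpen V) (hv : ContDiffOn ℝ 2 v V) (hp : p ∈ V)
    (a b : Fin (2*n+1)) : pd a (pd b v) p = pd b (pd a v) p := by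
  have hsymm := (hv.contDiffAt (hV.mem_nhds hp)).isSymmSndFDerivAt (by rw [minSmoothness_of_isRCLikeNormedField])
  have hdf : DifferentiableAt ℝ (fderiv ℝ v) p :=
    diffAt hV (hv.fderiv_of_isOpen hV (le_refl 2)) le_rfl hp
  have key : ∀ c d : Fin (2*n+1), pd c (pd d v) p
      = fderiv ℝ (fderiv ℝ v) p (Pi.single c 1) (Pi.single d 1) := by
    intro c d
    have h3 := (hdf.hasFDerivAt.clm_apply (hasFDerivAt_const (Pi.single d (1:ℝ)) p)).fderiv
    beta_reduce at h3
    rw [show pd c (pd d v) p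
        = fderiv ℝ (fun y => (fderiv ℝ v y) (Pi.single d (1:ℝ))) p (Pi.single c 1) from rfl, h3]
    simp
  rw [key, key, hsymm]



variable {n : ℕ} {V : Set (Heis n)} {p : Heis n} {f g v : Heis n → ℂ}
variable {m m' : WithTop ℕ∞}

lemma Zop_eq (j : Fin n) (v : Heis n → ℂ) : Zop j v = fun q =>
    (1/2 : ℂ) * pd (xIdx j) v q - Complex.I/2 * pd (yIdx j) v q
      + ((q (yIdx j) : ℂ) + Complex.I * (q (xIdx j) : ℂ)) * pd tIdx v q := by
  funext q
  simp only [Zop, Xop, Yop, Complex.real_smul]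
  push_cast
  ring

lemma Zbar_eq (j : Fin n) (v : Heis n → ℂ) : Zbar j v = fun q =>
    (1/2 : ℂ) * pd (xIdx j) v q + Complex.I/2 * pd (yIdx j) v q
      + ((q (yIdx j) : ℂ) - Complex.I * (q (xIdx j) : ℂ)) * pd tIdx v q := by
  funext q
  simp only [Zbar, Xop, Yop, Complex.real_smul]
  push_cast
  ring

lemma contDiffOn_Tvf (hV : IsOpen V) (h : ContDiffOn ℝ m' f V) (hm : m + 1 ≤ m') :
    ContDiffOn ℝ m (Tvf f) V := contDiffOn_pd hV tIdx h hm

lemma contDiffOn_Zop (hV : IsOpen V) (j : Fin n) (h : ContDiffOn ℝ m' f V) (hm : m + 1 ≤ m') :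
    ContDiffOn ℝ m (Zop j f) V := by
  rw [Zop_eq]
  have hx := contDiffOn_pd hV (xIdx j) h hm
  have hy := contDiffOn_pd hV (yIdx j) h hm
  have ht := contDiffOn_pd hV tIdx h hm
  exact ((contDiffOn_const.mul hx).sub (contDiffOn_const.mul hy)).add
    (((contDiffOn_coordC _).add (contDiffOn_const.mul (contDiffOn_coordC _))).mul ht)

lemma contDiffOn_Zbar (hV : IsOpen V) (j : Fin n) (h : ContDiffOn ℝ m' f V) (hm : m + 1 ≤ m') :
    ContDiffOn ℝ m (Zbar j f) V := by
  rw [Zbar_eq]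
  have hx := contDiffOn_pd hV (xIdx j) h hm
  have hy := contDiffOn_pd hV (yIdx j) h hm
  have ht := contDiffOn_pd hV tIdx h hm
  exact ((contDiffOn_const.mul hx).add (contDiffOn_const.mul hy)).add
    (((contDiffOn_coordC _).sub (contDiffOn_const.mul (contDiffOn_coordC _))).mul ht)

/-- master lemma : pd of Zop -/
lemma pd_Zop (hV : IsOpen V) (j : Fin n) (i : Fin (2*n+1)) (hv : ContDiffOn ℝ 2 v V)
    (hp : p ∈ V) :
    pd i (Zop j v) p = (1/2 : ℂ) * pd i (pd (xIdx j) v) p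
      - Complex.I/2 * pd i (pd (yIdx j) v) p
      + ((if yIdx j = i then 1 else 0) + Complex.I * (if xIdx j = i then 1 else 0)) * pd tIdx v p
      + ((p (yIdx j) : ℂ) + Complex.I * (p (xIdx j) : ℂ)) * pd i (pd tIdx v) p := by
  have hx : DifferentiableAt ℝ (pd (xIdx j) v) p :=
    diffAt hV (contDiffOn_pd hV _ hv (by norm_num)) le_rfl hp
  have hy : DifferentiableAt ℝ (pd (yIdx j) v) p :=
    diffAt hV (contDiffOn_pd hV _ hv (by norm_num)) le_rfl hp
  have ht : DifferentiableAt ℝ (pd tIdx v) p :=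
    diffAt hV (contDiffOn_pd hV _ hv (by norm_num)) le_rfl hp
  have hcoef : DifferentiableAt ℝ
      (fun q : Heis n => (q (yIdx j) : ℂ) + Complex.I * (q (xIdx j) : ℂ)) p :=
    (differentiableAt_coordC _).add ((differentiableAt_const _).mul (differentiableAt_coordC _))
  rw [Zop_eq]
  rw [pd_add i (((differentiableAt_const _).fun_mul hx).fun_sub ((differentiableAt_const _).fun_mul hy))
    (hcoef.fun_mul ht),
    pd_sub i ((differentiableAt_const _).fun_mul hx) ((differentiableAt_const _).fun_mul hy),
    pd_const_mul i _ hx, pd_const_mul i _ hy, pd_mul i hcoef ht,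
    pd_add i (differentiableAt_coordC _) ((differentiableAt_const _).fun_mul (differentiableAt_coordC _)),
    pd_const_mul i _ (differentiableAt_coordC _), pd_coordC, pd_coordC]
  ring

/-- master lemma : pd of Zbar -/
lemma pd_Zbar (hV : IsOpen V) (j : Fin n) (i : Fin (2*n+1)) (hv : ContDiffOn ℝ 2 v V)
    (hp : p ∈ V) :
    pd i (Zbar j v) p = (1/2 : ℂ) * pd i (pd (xIdx j) v) p
      + Complex.I/2 * pd i (pd (yIdx j) v) p
      + ((if yIdx j = i then 1 else 0) - Complex.I * (if xIdx j = i then 1 else 0)) * pd tIdx v p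
      + ((p (yIdx j) : ℂ) - Complex.I * (p (xIdx j) : ℂ)) * pd i (pd tIdx v) p := by
  have hx : DifferentiableAt ℝ (pd (xIdx j) v) p :=
    diffAt hV (contDiffOn_pd hV _ hv (by norm_num)) le_rfl hp
  have hy : DifferentiableAt ℝ (pd (yIdx j) v) p :=
    diffAt hV (contDiffOn_pd hV _ hv (by norm_num)) le_rfl hp
  have ht : DifferentiableAt ℝ (pd tIdx v) p :=
    diffAt hV (contDiffOn_pd hV _ hv (by norm_num)) le_rfl hp
  have hcoef : DifferentiableAt ℝ
      (fun q : Heis n => (q (yIdx j) : ℂ) - Complex.I * (q (xIdx j) : ℂ)) p :=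
    (differentiableAt_coordC _).sub ((differentiableAt_const _).mul (differentiableAt_coordC _))
  rw [Zbar_eq]
  rw [pd_add i (((differentiableAt_const _).fun_mul hx).fun_add ((differentiableAt_const _).fun_mul hy))
    (hcoef.fun_mul ht),
    pd_add i ((differentiableAt_const _).fun_mul hx) ((differentiableAt_const _).fun_mul hy),
    pd_const_mul i _ hx, pd_const_mul i _ hy, pd_mul i hcoef ht,
    pd_sub i (differentiableAt_coordC _) ((differentiableAt_const _).fun_mul (differentiableAt_coordC _)),
    pd_const_mul i _ (differentiableAt_coordC _), pd_coordC, pd_coordC]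
  ring



variable {n : ℕ} {V : Set (Heis n)} {p : Heis n} {f g v : Heis n → ℂ}
variable {m m' : WithTop ℕ∞}

lemma Zop_apply (j : Fin n) (v : Heis n → ℂ) (p : Heis n) :
    Zop j v p = (1/2 : ℂ) * pd (xIdx j) v p - Complex.I/2 * pd (yIdx j) v p
      + ((p (yIdx j) : ℂ) + Complex.I * (p (xIdx j) : ℂ)) * pd tIdx v p :=
  congrFun (Zop_eq j v) p

lemma Zbar_apply (j : Fin n) (v : Heis n → ℂ) (p : Heis n) :
    Zbar j v p = (1/2 : ℂ) * pd (xIdx j) v p + Complex.I/2 * pd (yIdx j) v p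
      + ((p (yIdx j) : ℂ) - Complex.I * (p (xIdx j) : ℂ)) * pd tIdx v p :=
  congrFun (Zbar_eq j v) p

lemma Zbar_Zop_comm (hV : IsOpen V) (hv : ContDiffOn ℝ 2 v V) (hp : p ∈ V) (j k : Fin n) :
    Zbar k (Zop j v) p = Zop j (Zbar k v) p + (if j = k then 2*Complex.I*Tvf v p else 0) := by
  have S := pd_pd_comm hV hv hp
  rw [Zbar_apply, Zop_apply,
    pd_Zop hV j (xIdx k) hv hp, pd_Zop hV j (yIdx k) hv hp, pd_Zop hV j tIdx hv hp,
    pd_Zbar hV k (xIdx j) hv hp, pd_Zbar hV k (yIdx j) hv hp, pd_Zbar hV k tIdx hv hp]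
  simp only [xIdx_eq_xIdx, yIdx_eq_yIdx, xIdx_ne_yIdx, yIdx_ne_xIdx, xIdx_ne_tIdx,
    tIdx_ne_xIdx, yIdx_ne_tIdx, tIdx_ne_yIdx, if_true, if_false, ite_true, ite_false, Tvf]
  by_cases h : j = k
  · subst h
    simp only [if_pos rfl]
    rw [S (xIdx j) (yIdx j), S (xIdx j) tIdx, S (yIdx j) tIdx]
    simp only [if_true, reduceIte]
    ring
  · have h' : ¬ (k = j) := fun hh => h hh.symm
    simp only [if_neg h, if_neg h']
    rw [S (xIdx k) (xIdx j), S (xIdx k) (yIdx j), S (xIdx k) tIdx,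
      S (yIdx k) (xIdx j), S (yIdx k) (yIdx j), S (yIdx k) tIdx,
      S (xIdx j) tIdx, S (yIdx j) tIdx]
    ring



variable {n : ℕ} {V : Set (Heis n)} {p : Heis n} {f g v : Heis n → ℂ}
variable {m m' : WithTop ℕ∞}

lemma Tvf_Zop_comm (hV : IsOpen V) (hv : ContDiffOn ℝ 2 v V) (hp : p ∈ V) (k : Fin n) :
    Tvf (Zop k v) p = Zop k (Tvf v) p := by
  have S := pd_pd_comm hV hv hp
  show pd tIdx (Zop k v) p = _
  rw [pd_Zop hV k tIdx hv hp, Zop_apply]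
  simp only [yIdx_ne_tIdx, tIdx_ne_yIdx, xIdx_ne_tIdx, tIdx_ne_xIdx, if_false, ite_false, Tvf]
  rw [show Tvf v = pd tIdx v from rfl, S (xIdx k) tIdx, S (yIdx k) tIdx]
  ring

lemma Tvf_Zbar_comm (hV : IsOpen V) (hv : ContDiffOn ℝ 2 v V) (hp : p ∈ V) (k : Fin n) :
    Tvf (Zbar k v) p = Zbar k (Tvf v) p := by
  have S := pd_pd_comm hV hv hp
  show pd tIdx (Zbar k v) p = _
  rw [pd_Zbar hV k tIdx hv hp, Zbar_apply]
  simp only [yIdx_ne_tIdx, tIdx_ne_yIdx, xIdx_ne_tIdx, tIdx_ne_xIdx, if_false, ite_false, Tvf]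
  rw [show Tvf v = pd tIdx v from rfl, S (xIdx k) tIdx, S (yIdx k) tIdx]
  ring

/- ## Linearity at a point -/
lemma Tvf_add (hf : DifferentiableAt ℝ f p) (hg : DifferentiableAt ℝ g p) :
    Tvf (fun q => f q + g q) p = Tvf f p + Tvf g p := pd_add tIdx hf hg

lemma Tvf_const_mul (c : ℂ) (hf : DifferentiableAt ℝ f p) :
    Tvf (fun q => c * f q) p = c * Tvf f p := pd_const_mul tIdx c hf

lemma Zop_add (j : Fin n) (hf : DifferentiableAt ℝ f p) (hg : DifferentiableAt ℝ g p) :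
    Zop j (fun q => f q + g q) p = Zop j f p + Zop j g p := by
  rw [Zop_apply, Zop_apply, Zop_apply, pd_add _ hf hg, pd_add _ hf hg, pd_add _ hf hg]
  ring

lemma Zop_const_mul (j : Fin n) (c : ℂ) (hf : DifferentiableAt ℝ f p) :
    Zop j (fun q => c * f q) p = c * Zop j f p := by
  rw [Zop_apply, Zop_apply, pd_const_mul _ c hf, pd_const_mul _ c hf, pd_const_mul _ c hf]
  ring

lemma Zbar_add (j : Fin n) (hf : DifferentiableAt ℝ f p) (hg : DifferentiableAt ℝ g p) :
    Zbar j (fun q => f q + g q) p = Zbar j f p + Zbar j g p := by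
  rw [Zbar_apply, Zbar_apply, Zbar_apply, pd_add _ hf hg, pd_add _ hf hg, pd_add _ hf hg]
  ring

lemma Zbar_const_mul (j : Fin n) (c : ℂ) (hf : DifferentiableAt ℝ f p) :
    Zbar j (fun q => c * f q) p = c * Zbar j f p := by
  rw [Zbar_apply, Zbar_apply, pd_const_mul _ c hf, pd_const_mul _ c hf, pd_const_mul _ c hf]
  ring

lemma Zop_sum {ι : Type*} (j : Fin n) (s : Finset ι) (F : ι → Heis n → ℂ)
    (hf : ∀ k ∈ s, DifferentiableAt ℝ (F k) p) :
    Zop j (fun q => ∑ k ∈ s, F k q) p = ∑ k ∈ s, Zop j (F k) p := by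
  rw [Zop_apply, pd_sum _ s F hf, pd_sum _ s F hf, pd_sum _ s F hf]
  simp only [Zop_apply]
  rw [Finset.mul_sum, Finset.mul_sum, Finset.mul_sum, ← Finset.sum_sub_distrib,
    ← Finset.sum_add_distrib]

lemma Zbar_sum {ι : Type*} (j : Fin n) (s : Finset ι) (F : ι → Heis n → ℂ)
    (hf : ∀ k ∈ s, DifferentiableAt ℝ (F k) p) :
    Zbar j (fun q => ∑ k ∈ s, F k q) p = ∑ k ∈ s, Zbar j (F k) p := by
  rw [Zbar_apply, pd_sum _ s F hf, pd_sum _ s F hf, pd_sum _ s F hf]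
  simp only [Zbar_apply]
  rw [Finset.mul_sum, Finset.mul_sum, Finset.mul_sum, ← Finset.sum_add_distrib,
    ← Finset.sum_add_distrib]

lemma Tvf_sum {ι : Type*} (s : Finset ι) (F : ι → Heis n → ℂ)
    (hf : ∀ k ∈ s, DifferentiableAt ℝ (F k) p) :
    Tvf (fun q => ∑ k ∈ s, F k q) p = ∑ k ∈ s, Tvf (F k) p := pd_sum tIdx s F hf

/- ## Congruence on V -/
lemma Tvf_congr (hV : IsOpen V) (h : ∀ q ∈ V, f q = g q) (hp : p ∈ V) :
    Tvf f p = Tvf g p := pd_congr hV tIdx h hp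

lemma Zop_congr (hV : IsOpen V) (j : Fin n) (h : ∀ q ∈ V, f q = g q) (hp : p ∈ V) :
    Zop j f p = Zop j g p := by
  rw [Zop_apply, Zop_apply, pd_congr hV _ h hp, pd_congr hV _ h hp, pd_congr hV _ h hp]

lemma Zbar_congr (hV : IsOpen V) (j : Fin n) (h : ∀ q ∈ V, f q = g q) (hp : p ∈ V) :
    Zbar j f p = Zbar j g p := by
  rw [Zbar_apply, Zbar_apply, pd_congr hV _ h hp, pd_congr hV _ h hp, pd_congr hV _ h hp]



variable {n : ℕ} {V : Set (Heis n)} {p : Heis n} {f g v : Heis n → ℂ}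
variable {m m' : WithTop ℕ∞}

lemma Xop_eqC (j : Fin n) (v : Heis n → ℂ) : Xop j v = fun q =>
    pd (xIdx j) v q + (2:ℂ) * (q (yIdx j) : ℂ) * pd tIdx v q := by
  funext q
  simp only [Xop, Complex.real_smul]
  push_cast
  ring

lemma Yop_eqC (j : Fin n) (v : Heis n → ℂ) : Yop j v = fun q =>
    pd (yIdx j) v q - (2:ℂ) * (q (xIdx j) : ℂ) * pd tIdx v q := by
  funext q
  simp only [Yop, Complex.real_smul]
  push_cast
  ring

lemma pd_Xop (hV : IsOpen V) (j : Fin n) (i : Fin (2*n+1)) (hv : ContDiffOn ℝ 2 v V)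
    (hp : p ∈ V) :
    pd i (Xop j v) p = pd i (pd (xIdx j) v) p
      + (2:ℂ) * (if yIdx j = i then 1 else 0) * pd tIdx v p
      + (2:ℂ) * (p (yIdx j) : ℂ) * pd i (pd tIdx v) p := by
  have hx : DifferentiableAt ℝ (pd (xIdx j) v) p :=
    diffAt hV (contDiffOn_pd hV _ hv (by norm_num)) le_rfl hp
  have ht : DifferentiableAt ℝ (pd tIdx v) p :=
    diffAt hV (contDiffOn_pd hV _ hv (by norm_num)) le_rfl hp
  have hcoef : DifferentiableAt ℝ (fun q : Heis n => (2:ℂ) * (q (yIdx j) : ℂ)) p :=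
    (differentiableAt_const _).mul (differentiableAt_coordC _)
  rw [Xop_eqC]
  rw [pd_add i hx (by exact (hcoef.mul ht) : DifferentiableAt ℝ
      (fun q => (2:ℂ) * (q (yIdx j):ℂ) * pd tIdx v q) p),
    pd_mul i hcoef ht, pd_const_mul i _ (differentiableAt_coordC _), pd_coordC]
  ring

lemma pd_Yop (hV : IsOpen V) (j : Fin n) (i : Fin (2*n+1)) (hv : ContDiffOn ℝ 2 v V)
    (hp : p ∈ V) :
    pd i (Yop j v) p = pd i (pd (yIdx j) v) p
      - (2:ℂ) * (if xIdx j = i then 1 else 0) * pd tIdx v p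
      - (2:ℂ) * (p (xIdx j) : ℂ) * pd i (pd tIdx v) p := by
  have hy : DifferentiableAt ℝ (pd (yIdx j) v) p :=
    diffAt hV (contDiffOn_pd hV _ hv (by norm_num)) le_rfl hp
  have ht : DifferentiableAt ℝ (pd tIdx v) p :=
    diffAt hV (contDiffOn_pd hV _ hv (by norm_num)) le_rfl hp
  have hcoef : DifferentiableAt ℝ (fun q : Heis n => (2:ℂ) * (q (xIdx j) : ℂ)) p :=
    (differentiableAt_const _).mul (differentiableAt_coordC _)
  rw [Yop_eqC]
  rw [pd_sub i hy (by exact (hcoef.mul ht) : DifferentiableAt ℝ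
      (fun q => (2:ℂ) * (q (xIdx j):ℂ) * pd tIdx v q) p),
    pd_mul i hcoef ht, pd_const_mul i _ (differentiableAt_coordC _), pd_coordC]
  ring

lemma Xop_applyC (j : Fin n) (v : Heis n → ℂ) (p : Heis n) :
    Xop j v p = pd (xIdx j) v p + (2:ℂ) * (p (yIdx j) : ℂ) * pd tIdx v p :=
  congrFun (Xop_eqC j v) p

lemma Yop_applyC (j : Fin n) (v : Heis n → ℂ) (p : Heis n) :
    Yop j v p = pd (yIdx j) v p - (2:ℂ) * (p (xIdx j) : ℂ) * pd tIdx v p :=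
  congrFun (Yop_eqC j v) p

lemma XXYY_eq (hV : IsOpen V) (hv : ContDiffOn ℝ 2 v V) (hp : p ∈ V) (j : Fin n) :
    Xop j (Xop j v) p + Yop j (Yop j v) p
      = 4 * Zop j (Zbar j v) p + 4 * Complex.I * Tvf v p := by
  have S := pd_pd_comm hV hv hp
  rw [Xop_applyC, Yop_applyC, Zop_apply,
    pd_Xop hV j (xIdx j) hv hp, pd_Xop hV j tIdx hv hp,
    pd_Yop hV j (yIdx j) hv hp, pd_Yop hV j tIdx hv hp,
    pd_Zbar hV j (xIdx j) hv hp, pd_Zbar hV j (yIdx j) hv hp, pd_Zbar hV j tIdx hv hp]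
  simp only [xIdx_eq_xIdx, yIdx_eq_yIdx, xIdx_ne_yIdx, yIdx_ne_xIdx, xIdx_ne_tIdx,
    tIdx_ne_xIdx, yIdx_ne_tIdx, tIdx_ne_yIdx, if_false, ite_false, if_true, ite_true,
    reduceIte, Tvf]
  rw [S (xIdx j) (yIdx j), S (xIdx j) tIdx, S (yIdx j) tIdx]
  ring_nf
  simp only [Complex.I_sq]
  ring

lemma Lop_eq (hV : IsOpen V) (hv : ContDiffOn ℝ 2 v V) (hp : p ∈ V) (c : ℝ) :
    Lop c v p = -∑ j : Fin n, Zop j (Zbar j v) p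
      + ((c:ℂ) - Complex.I * n) * Tvf v p := by
  unfold Lop
  rw [Finset.sum_congr rfl (fun j _ => XXYY_eq hV hv hp j), Finset.sum_add_distrib,
    Finset.sum_const, Finset.card_univ, Fintype.card_fin]
  simp only [nsmul_eq_mul, ← Finset.mul_sum]
  ring



variable {n : ℕ} {V : Set (Heis n)} {p : Heis n} {f g v u : Heis n → ℂ}
variable {m m' : WithTop ℕ∞}

lemma Xop_congr (hV : IsOpen V) (j : Fin n) (h : ∀ q ∈ V, f q = g q) (hp : p ∈ V) :
    Xop j f p = Xop j g p := by
  unfold Xop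
  rw [pd_congr hV _ h hp, pd_congr hV _ h hp]

lemma Yop_congr (hV : IsOpen V) (j : Fin n) (h : ∀ q ∈ V, f q = g q) (hp : p ∈ V) :
    Yop j f p = Yop j g p := by
  unfold Yop
  rw [pd_congr hV _ h hp, pd_congr hV _ h hp]

lemma Lop_congr (hV : IsOpen V) (c : ℝ) (h : ∀ q ∈ V, f q = g q) (hp : p ∈ V) :
    Lop c f p = Lop c g p := by
  unfold Lop
  rw [Tvf_congr hV h hp,
    Finset.sum_congr rfl (fun j _ => by
      rw [Xop_congr hV j (fun q hq => Xop_congr hV j h hq) hp,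
        Yop_congr hV j (fun q hq => Yop_congr hV j h hq) hp])]

/-- Normal-form term for `T(Z_k Z̄_k u)`. -/
lemma Tvf_ZZbar (hV : IsOpen V) (hu : ContDiffOn ℝ 4 u V) (hp : p ∈ V) (k : Fin n) :
    Tvf (Zop k (Zbar k u)) p = Zop k (Zbar k (Tvf u)) p := by
  have h2u : ContDiffOn ℝ 2 u V := hu.of_le (by norm_num)
  have hZb2 : ContDiffOn ℝ 2 (Zbar k u) V := contDiffOn_Zbar hV k hu (by norm_num)
  rw [Tvf_Zop_comm hV hZb2 hp k,
    Zop_congr hV k (fun q hq => Tvf_Zbar_comm hV h2u hq k) hp]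

/-- The `Z̄Z̄ZZ` term in normal form. -/
lemma S1_eq (hV : IsOpen V) (hu : ContDiffOn ℝ 4 u V) (hp : p ∈ V) (j k : Fin n) :
    Zbar j (Zbar k (Zop j (Zop k u))) p
      = Zop j (Zbar j (Zop k (Zbar k u))) p
        + 2*Complex.I * Zop j (Zbar j (Tvf u)) p + 2*Complex.I * Zop k (Zbar k (Tvf u)) p
        - 4 * Tvf (Tvf u) p
        + (if j = k then 2*Complex.I * Zop k (Zbar k (Tvf u)) p - 4 * Tvf (Tvf u) p
           else 0) := by
  have h2u : ContDiffOn ℝ 2 u V := hu.of_le (by norm_num)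
  have hZk3 : ContDiffOn ℝ 3 (Zop k u) V := contDiffOn_Zop hV k hu (by norm_num)
  have hZk2 : ContDiffOn ℝ 2 (Zop k u) V := hZk3.of_le (by norm_num)
  have hTu3 : ContDiffOn ℝ 3 (Tvf u) V := contDiffOn_Tvf hV hu (by norm_num)
  have hTu2 : ContDiffOn ℝ 2 (Tvf u) V := hTu3.of_le (by norm_num)
  have hZbarZ2 : ContDiffOn ℝ 2 (Zbar k (Zop k u)) V := contDiffOn_Zbar hV k hZk3 (by norm_num)
  have hZbk3 : ContDiffOn ℝ 3 (Zbar k u) V := contDiffOn_Zbar hV k hu (by norm_num)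
  have hZZbar2 : ContDiffOn ℝ 2 (Zop k (Zbar k u)) V := contDiffOn_Zop hV k hZbk3 (by norm_num)
  have hTZk2 : ContDiffOn ℝ 2 (Tvf (Zop k u)) V := contDiffOn_Tvf hV hZk3 (by norm_num)
  have hTTu2 : ContDiffOn ℝ 2 (Tvf (Tvf u)) V := contDiffOn_Tvf hV hTu3 (by norm_num)
  have hZbTu2 : ContDiffOn ℝ 2 (Zbar j (Tvf u)) V := contDiffOn_Zbar hV j hTu3 (by norm_num)
  -- inner swap h3 : Z̄_k Z_k u = Z_k Z̄_k u + 2I T u on V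
  have h3 : ∀ q ∈ V, Zbar k (Zop k u) q = Zop k (Zbar k u) q + (2*Complex.I) * Tvf u q := by
    intro q hq
    have := Zbar_Zop_comm hV h2u hq k k
    simpa using this
  -- (a)
  have h4 : ∀ q ∈ V, Zbar j (Zbar k (Zop k u)) q
      = Zbar j (Zop k (Zbar k u)) q + (2*Complex.I) * Zbar j (Tvf u) q := by
    intro q hq
    rw [Zbar_congr hV j h3 hq,
      Zbar_add j (diffAt hV hZZbar2 (by norm_num) hq)
        ((differentiableAt_const _).fun_mul (diffAt hV hTu3 (by norm_num) hq)),
      Zbar_const_mul j _ (diffAt hV hTu3 (by norm_num) hq)]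
  have e3 : Zop j (Zbar j (Zbar k (Zop k u))) p
      = Zop j (Zbar j (Zop k (Zbar k u))) p + (2*Complex.I) * Zop j (Zbar j (Tvf u)) p := by
    rw [Zop_congr hV j h4 hp,
      Zop_add j (diffAt hV (contDiffOn_Zbar hV j hZZbar2 (by norm_num)) le_rfl hp)
        ((differentiableAt_const _).fun_mul (diffAt hV hZbTu2 (by norm_num) hp)),
      Zop_const_mul j _ (diffAt hV hZbTu2 (by norm_num) hp)]
  -- (b)
  have e4 : Tvf (Zbar k (Zop k u)) p
      = Zop k (Zbar k (Tvf u)) p + (2*Complex.I) * Tvf (Tvf u) p := by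
    rw [Tvf_congr hV h3 hp,
      Tvf_add (diffAt hV hZZbar2 (by norm_num) hp)
        ((differentiableAt_const _).fun_mul (diffAt hV hTu3 (by norm_num) hp)),
      Tvf_const_mul _ (diffAt hV hTu3 (by norm_num) hp), Tvf_ZZbar hV hu hp k]
  -- C1 at p for the outer pair (Z̄_j Z_j) applied to w = Z̄_k Z_k u
  have e2 : Zbar j (Zop j (Zbar k (Zop k u))) p
      = Zop j (Zbar j (Zbar k (Zop k u))) p + (2*Complex.I) * Tvf (Zbar k (Zop k u)) p := by
    have := Zbar_Zop_comm hV hZbarZ2 hp j j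
    simpa using this
  by_cases hjk : j = k
  · subst hjk
    -- h1 with the extra T-term
    have h1 : ∀ q ∈ V, Zbar j (Zop j (Zop j u)) q
        = Zop j (Zbar j (Zop j u)) q + (2*Complex.I) * Tvf (Zop j u) q := by
      intro q hq
      have := Zbar_Zop_comm hV hZk2 hq j j
      simpa using this
    have e1 : Zbar j (Zbar j (Zop j (Zop j u))) p
        = Zbar j (Zop j (Zbar j (Zop j u))) p
          + (2*Complex.I) * Zbar j (Tvf (Zop j u)) p := by
      rw [Zbar_congr hV j h1 hp,
        Zbar_add j (diffAt hV (contDiffOn_Zop hV j hZbarZ2 (by norm_num)) le_rfl hp)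
          ((differentiableAt_const _).fun_mul (diffAt hV hTZk2 (by norm_num) hp)),
        Zbar_const_mul j _ (diffAt hV hTZk2 (by norm_num) hp)]
    -- c-term
    have e5 : Zbar j (Tvf (Zop j u)) p
        = Zop j (Zbar j (Tvf u)) p + (2*Complex.I) * Tvf (Tvf u) p := by
      rw [Zbar_congr hV j (fun q hq => Tvf_Zop_comm hV h2u hq j) hp]
      have := Zbar_Zop_comm hV hTu2 hp j j
      simpa using this
    rw [e1, e2, e3, e4, e5]
    simp only [if_pos rfl]
    ring_nf
    simp only [Complex.I_sq, if_true, ite_true, reduceIte]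
    ring
  · have h1 : ∀ q ∈ V, Zbar k (Zop j (Zop k u)) q = Zop j (Zbar k (Zop k u)) q := by
      intro q hq
      have := Zbar_Zop_comm hV hZk2 hq j k
      simpa [hjk] using this
    have e1 : Zbar j (Zbar k (Zop j (Zop k u))) p
        = Zbar j (Zop j (Zbar k (Zop k u))) p := Zbar_congr hV j h1 hp
    rw [e1, e2, e3, e4]
    simp only [if_neg hjk]
    ring_nf
    simp only [Complex.I_sq, if_true, ite_true, reduceIte]
    ring

/-- The `ZZZ̄Z̄` term in normal form. -/
lemma S2_eq (hV : IsOpen V) (hu : ContDiffOn ℝ 4 u V) (hp : p ∈ V) (j k : Fin n) :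
    Zop j (Zop k (Zbar j (Zbar k u))) p
      = Zop j (Zbar j (Zop k (Zbar k u))) p
        - (if j = k then 2*Complex.I * Zop k (Zbar k (Tvf u)) p else 0) := by
  have h2u : ContDiffOn ℝ 2 u V := hu.of_le (by norm_num)
  have hZbk3 : ContDiffOn ℝ 3 (Zbar k u) V := contDiffOn_Zbar hV k hu (by norm_num)
  have hZbk2 : ContDiffOn ℝ 2 (Zbar k u) V := hZbk3.of_le (by norm_num)
  have hZZbar2 : ContDiffOn ℝ 2 (Zop k (Zbar k u)) V := contDiffOn_Zop hV k hZbk3 (by norm_num)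
  have hTZb2 : ContDiffOn ℝ 2 (Tvf (Zbar k u)) V := contDiffOn_Tvf hV hZbk3 (by norm_num)
  by_cases hjk : j = k
  · subst hjk
    have h1 : ∀ q ∈ V, Zop j (Zbar j (Zbar j u)) q
        = Zbar j (Zop j (Zbar j u)) q + (-(2*Complex.I)) * Tvf (Zbar j u) q := by
      intro q hq
      have := Zbar_Zop_comm hV hZbk2 hq j j
      simp only [reduceIte, if_pos rfl] at this
      linear_combination -this
    have e1 : Zop j (Zop j (Zbar j (Zbar j u))) p
        = Zop j (Zbar j (Zop j (Zbar j u))) p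
          + (-(2*Complex.I)) * Zop j (Tvf (Zbar j u)) p := by
      rw [Zop_congr hV j h1 hp,
        Zop_add j (diffAt hV (contDiffOn_Zbar hV j hZZbar2 (by norm_num)) le_rfl hp)
          ((differentiableAt_const _).fun_mul (diffAt hV hTZb2 (by norm_num) hp)),
        Zop_const_mul j _ (diffAt hV hTZb2 (by norm_num) hp)]
    have e5 : Zop j (Tvf (Zbar j u)) p = Zop j (Zbar j (Tvf u)) p :=
      Zop_congr hV j (fun q hq => Tvf_Zbar_comm hV h2u hq j) hp
    rw [e1, e5]
    simp only [if_pos rfl]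
    ring_nf
    simp only [Complex.I_sq, if_true, ite_true, reduceIte]
    try ring
  · have hkj : ¬ (k = j) := fun h => hjk h.symm
    have h1 : ∀ q ∈ V, Zop k (Zbar j (Zbar k u)) q = Zbar j (Zop k (Zbar k u)) q := by
      intro q hq
      have := Zbar_Zop_comm hV hZbk2 hq k j
      simp only [if_neg hkj, add_zero] at this
      exact this.symm
    rw [Zop_congr hV j h1 hp]
    simp only [if_neg hjk]
    ring



variable {n : ℕ} {V : Set (Heis n)} {p : Heis n} {u : Heis n → ℂ}

lemma hsum_eq (hV : IsOpen V) (hu : ContDiffOn ℝ 4 u V) (hp : p ∈ V) (j k : Fin n) :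
    Zbar j (Zbar k (Zop j (Zop k u))) p + Zop j (Zop k (Zbar j (Zbar k u))) p
      = 2 * Zop j (Zbar j (Zop k (Zbar k u))) p
        + 2*Complex.I * Zop j (Zbar j (Tvf u)) p
        + 2*Complex.I * Zop k (Zbar k (Tvf u)) p
        + (-4) * Tvf (Tvf u) p
        + (if j = k then (-4) * Tvf (Tvf u) p else 0) := by
  rw [S1_eq hV hu hp j k, S2_eq hV hu hp j k]
  by_cases hjk : j = k
  · simp only [if_pos hjk]
    ring
  · simp only [if_neg hjk]
    ring

lemma main_pointwise (hV : IsOpen V) (hu : ContDiffOn ℝ 4 u V) (hp : p ∈ V) (s : ℝ)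
    (hs : ((s:ℂ))^2 = (n:ℂ) * ((n:ℂ) + 2)) :
    (1/2 : ℂ) * ∑ j : Fin n, ∑ k : Fin n,
        (Zbar j (Zbar k (Zop j (Zop k u))) p + Zop j (Zop k (Zbar j (Zbar k u))) p)
      = Lop (-s) (Lop s u) p := by
  have h2u : ContDiffOn ℝ 2 u V := hu.of_le (by norm_num)
  have hTu3 : ContDiffOn ℝ 3 (Tvf u) V := contDiffOn_Tvf hV hu (by norm_num)
  have hTu2 : ContDiffOn ℝ 2 (Tvf u) V := hTu3.of_le (by norm_num)
  have hZZ2 : ∀ k : Fin n, ContDiffOn ℝ 2 (Zop k (Zbar k u)) V := fun k =>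
    contDiffOn_Zop hV k (contDiffOn_Zbar (m := 3) hV k hu (by norm_num)) (by norm_num)
  have hZbTu2 : ∀ j : Fin n, ContDiffOn ℝ 2 (Zbar j (Tvf u)) V := fun j =>
    contDiffOn_Zbar hV j hTu3 (by norm_num)
  -- abbreviations
  set SP : ℂ := ∑ j : Fin n, ∑ k : Fin n, Zop j (Zbar j (Zop k (Zbar k u))) p with hSP
  set SQ : ℂ := ∑ k : Fin n, Zop k (Zbar k (Tvf u)) p with hSQ
  set R : ℂ := Tvf (Tvf u) p with hR
  -- LHS
  have hLHS : ∑ j : Fin n, ∑ k : Fin n,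
      (Zbar j (Zbar k (Zop j (Zop k u))) p + Zop j (Zop k (Zbar j (Zbar k u))) p)
      = 2 * SP + (4 * Complex.I * (n:ℂ)) * SQ + (-4*(n:ℂ)^2 - 4*(n:ℂ)) * R := by
    rw [Finset.sum_congr rfl fun j _ => Finset.sum_congr rfl fun k _ => hsum_eq hV hu hp j k]
    simp only [Finset.sum_add_distrib, Finset.sum_const, Finset.card_univ, Fintype.card_fin,
      Finset.sum_ite_eq, Finset.mem_univ, if_true, nsmul_eq_mul, ← Finset.mul_sum, hSP, hSQ]
    ring
  -- RHS
  set g : Heis n → ℂ := fun q => (-1:ℂ) * (∑ k : Fin n, Zop k (Zbar k u) q)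
    + ((s:ℂ) - Complex.I*(n:ℂ)) * Tvf u q with hg
  have hLs : ∀ q ∈ V, Lop s u q = g q := by
    intro q hq
    rw [Lop_eq hV h2u hq s, hg]
    ring
  have hg2 : ContDiffOn ℝ 2 g V := by
    rw [hg]
    exact (contDiffOn_const.mul (ContDiffOn.sum fun k _ => hZZ2 k)).add
      (contDiffOn_const.mul hTu2)
  have hR2 : Lop (-s) (Lop s u) p
      = -∑ j : Fin n, Zop j (Zbar j g) p + (((-s : ℝ):ℂ) - Complex.I*(n:ℂ)) * Tvf g p := by
    rw [Lop_congr hV (-s) hLs hp, Lop_eq hV hg2 hp (-s)]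
  have hZbg : ∀ j : Fin n, ∀ q ∈ V, Zbar j g q
      = (-1:ℂ) * (∑ k : Fin n, Zbar j (Zop k (Zbar k u)) q)
        + ((s:ℂ) - Complex.I*(n:ℂ)) * Zbar j (Tvf u) q := by
    intro j q hq
    rw [hg,
      Zbar_add j ((differentiableAt_const _).fun_mul
          (DifferentiableAt.fun_sum fun k _ => diffAt hV (hZZ2 k) (by norm_num) hq))
        ((differentiableAt_const _).fun_mul (diffAt hV hTu3 (by norm_num) hq)),
      Zbar_const_mul j _ (DifferentiableAt.fun_sum fun k _ => diffAt hV (hZZ2 k) (by norm_num) hq),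
      Zbar_const_mul j _ (diffAt hV hTu3 (by norm_num) hq),
      Zbar_sum j Finset.univ _ (fun k _ => diffAt hV (hZZ2 k) (by norm_num) hq)]
  have hZZg : ∀ j : Fin n, Zop j (Zbar j g) p
      = (-1:ℂ) * (∑ k : Fin n, Zop j (Zbar j (Zop k (Zbar k u))) p)
        + ((s:ℂ) - Complex.I*(n:ℂ)) * Zop j (Zbar j (Tvf u)) p := by
    intro j
    rw [Zop_congr hV j (hZbg j) hp,
      Zop_add j ((differentiableAt_const _).fun_mul
          (DifferentiableAt.fun_sum fun k _ =>
            diffAt hV (contDiffOn_Zbar hV j (hZZ2 k) (by norm_num)) le_rfl hp))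
        ((differentiableAt_const _).fun_mul (diffAt hV (hZbTu2 j) (by norm_num) hp)),
      Zop_const_mul j _ (DifferentiableAt.fun_sum fun k _ =>
        diffAt hV (contDiffOn_Zbar hV j (hZZ2 k) (by norm_num)) le_rfl hp),
      Zop_const_mul j _ (diffAt hV (hZbTu2 j) (by norm_num) hp),
      Zop_sum j Finset.univ _ (fun k _ =>
        diffAt hV (contDiffOn_Zbar hV j (hZZ2 k) (by norm_num)) le_rfl hp)]
  have hTg : Tvf g p = (-1:ℂ) * SQ + ((s:ℂ) - Complex.I*(n:ℂ)) * R := by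
    rw [hg,
      Tvf_add ((differentiableAt_const _).fun_mul
          (DifferentiableAt.fun_sum fun k _ => diffAt hV (hZZ2 k) (by norm_num) hp))
        ((differentiableAt_const _).fun_mul (diffAt hV hTu3 (by norm_num) hp)),
      Tvf_const_mul _ (DifferentiableAt.fun_sum fun k _ => diffAt hV (hZZ2 k) (by norm_num) hp),
      Tvf_const_mul _ (diffAt hV hTu3 (by norm_num) hp),
      Tvf_sum Finset.univ _ (fun k _ => diffAt hV (hZZ2 k) (by norm_num) hp),
      Finset.sum_congr rfl fun k _ => Tvf_ZZbar hV hu hp k]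
  rw [hLHS, hR2, hTg, Finset.sum_congr rfl fun j _ => hZZg j]
  simp only [Finset.sum_add_distrib, ← Finset.mul_sum, hSP, hSQ]
  push_cast
  linear_combination R * hs - ((n:ℂ)^2*R) * Complex.I_sq


end ZZaux
end

/-- For every `C⁴` complex-valued function `u` on an open subset of `ℝ^{2n+1}`,
`½ Σ_{j,k} ( Z̄_jZ̄_k(Z_jZ_k u) + Z_jZ_k(Z̄_jZ̄_k u) ) = L_{-√(n(n+2))}(L_{√(n(n+2))} u)`
pointwise. -/
theorem ZZbar_identity {n : ℕ} (V : Set (Heis n)) (hV : IsOpen V)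
    (u : Heis n → ℂ) (hu : ContDiffOn ℝ 4 u V) :
    ∀ p ∈ V,
      (1/2 : ℂ) * ∑ j : Fin n, ∑ k : Fin n,
          (Zbar j (Zbar k (Zop j (Zop k u))) p + Zop j (Zop k (Zbar j (Zbar k u))) p)
        = Lop (-Real.sqrt (n * (n+2))) (Lop (Real.sqrt (n * (n+2))) u) p := by
  intro p hp
  have hs : ((Real.sqrt ((n:ℝ) * ((n:ℝ)+2)) : ℝ) : ℂ)^2 = (n:ℂ) * ((n:ℂ) + 2) := by
    rw [← Complex.ofReal_pow, Real.sq_sqrt (by positivity)]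
    push_cast
    ring
  exact ZZaux.main_pointwise hV hu hp _ hs
end

section
/- Let F : U → U' be a C² conformal diffeomorphism between open connected subsets of ℍⁿ, G = F⁻¹ = (g_1,…,g_{2n+1}), and let W̃ be one of the right-invariant vector fields X̃_1,…,X̃_n, Ỹ_1,…,Ỹ_n, T. Suppose ψ : U → ℝ is a C² function satisfying (W̃ g_ℓ) ∘ F = X_{n+ℓ}ψ and (W̃ g_{n+ℓ}) ∘ F = −X_ℓψ on U for every ℓ = 1,…,n. Then Z_kZ_ℓψ = 0 on U for all 1 ≤ k,ℓ ≤ n. -/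
open Set Matrix MeasureTheory

noncomputable section

variable {n : ℕ} {E : Type*} [NormedAddCommGroup E] [NormedSpace ℝ E]

section Aux

variable {n : ℕ} {E : Type*} [NormedAddCommGroup E] [NormedSpace ℝ E]

/-! ### Index lemmas -/

lemma xIdx_ne_tIdx (j : Fin n) : xIdx j ≠ (tIdx : Fin (2*n+1)) := by
  have := j.2; simp [xIdx, tIdx, Fin.ext_iff]; omega

lemma yIdx_ne_tIdx (j : Fin n) : yIdx j ≠ (tIdx : Fin (2*n+1)) := by
  have := j.2; simp [yIdx, tIdx, Fin.ext_iff]; omega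

lemma xIdx_ne_yIdx (j k : Fin n) : xIdx j ≠ yIdx k := by
  have := j.2; simp [xIdx, yIdx, Fin.ext_iff]; omega

lemma xIdx_inj {j k : Fin n} : xIdx j = xIdx k ↔ j = k := by
  simp [xIdx, Fin.ext_iff]

lemma yIdx_inj {j k : Fin n} : yIdx j = yIdx k ↔ j = k := by
  simp [yIdx, Fin.ext_iff]

/-- `x`-index inside `Fin (2n)`. -/
def xH (j : Fin n) : Fin (2*n) := ⟨j.1, by have := j.2; omega⟩
/-- `y`-index inside `Fin (2n)`. -/
def yH (j : Fin n) : Fin (2*n) := ⟨n + j.1, by have := j.2; omega⟩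

lemma hIdx_xH (j : Fin n) : hIdx (xH j) = xIdx j := rfl
lemma hIdx_yH (j : Fin n) : hIdx (yH j) = yIdx j := rfl

lemma xH_inj {j k : Fin n} : xH j = xH k ↔ j = k := by simp [xH, Fin.ext_iff]
lemma yH_inj {j k : Fin n} : yH j = yH k ↔ j = k := by simp [yH, Fin.ext_iff]
lemma xH_ne_yH (j k : Fin n) : xH j ≠ yH k := by
  have := j.2; simp [xH, yH, Fin.ext_iff]; omega

lemma XYop_xH (j : Fin n) (u : Heis n → E) (p : Heis n) :
    XYop (xH j) u p = Xop j u p := by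
  rw [XYop, dif_pos (show ((xH j : ℕ)) < n from j.2)]
  congr 1

lemma XYop_yH (j : Fin n) (u : Heis n → E) (p : Heis n) :
    XYop (yH j) u p = Yop j u p := by
  rw [XYop, dif_neg (show ¬ ((yH j : ℕ)) < n by simp [yH])]
  congr 1
  exact Fin.ext (by simp [yH])

lemma finH_cases (m : Fin (2*n)) : (∃ j, m = xH j) ∨ (∃ j, m = yH j) := by
  have hm := m.2
  rcases lt_or_ge (m : ℕ) n with h | h
  · exact Or.inl ⟨⟨m.1, h⟩, Fin.ext rfl⟩
  · exact Or.inr ⟨⟨m.1 - n, by omega⟩, Fin.ext (by simp [yH]; omega)⟩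

lemma idx_cases (i : Fin (2*n+1)) :
    (∃ j, i = xIdx j) ∨ (∃ j, i = yIdx j) ∨ i = tIdx := by
  have hi := i.2
  rcases lt_or_ge (i : ℕ) n with h | h
  · exact Or.inl ⟨⟨i.1, h⟩, Fin.ext rfl⟩
  rcases lt_or_ge (i : ℕ) (2*n) with h2 | h2
  · exact Or.inr (Or.inl ⟨⟨i.1 - n, by omega⟩, Fin.ext (by simp [yIdx]; omega)⟩)
  · exact Or.inr (Or.inr (Fin.ext (by simp [tIdx]; omega)))

/-- Splitting a sum over `Fin (2n)` into `x` and `y` parts. -/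
lemma sum_xy {M : Type*} [AddCommMonoid M] (φ : Fin (2*n) → M) :
    ∑ m, φ m = (∑ j, φ (xH j)) + ∑ j, φ (yH j) := by
  rw [← Equiv.sum_comp (finSumFinEquiv.trans (finCongr (by omega : n + n = 2*n))) φ,
    Fintype.sum_sum_type]
  congr 1

end Aux

section Aux2

variable {n : ℕ} {E : Type*} [NormedAddCommGroup E] [NormedSpace ℝ E]

/-- Direction vector of `X_j` at `p`. -/
def vX (j : Fin n) (p : Heis n) : Heis n :=
  Pi.single (xIdx j) 1 + (2 * p (yIdx j)) • (Pi.single tIdx 1 : Heis n)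

/-- Direction vector of `Y_j` at `p`. -/
def vY (j : Fin n) (p : Heis n) : Heis n :=
  Pi.single (yIdx j) 1 - (2 * p (xIdx j)) • (Pi.single tIdx 1 : Heis n)

lemma vX_x (j k : Fin n) (p : Heis n) : vX j p (xIdx k) = if k = j then 1 else 0 := by
  simp [vX, Pi.single_apply, xIdx_ne_tIdx, xIdx_inj]

lemma vX_y (j k : Fin n) (p : Heis n) : vX j p (yIdx k) = 0 := by
  simp [vX, Pi.single_apply, yIdx_ne_tIdx, (xIdx_ne_yIdx j k).symm]

lemma vX_t (j : Fin n) (p : Heis n) : vX j p tIdx = 2 * p (yIdx j) := by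
  simp [vX, Pi.single_apply, (xIdx_ne_tIdx j).symm]

lemma vY_x (j k : Fin n) (p : Heis n) : vY j p (xIdx k) = 0 := by
  simp [vY, Pi.single_apply, xIdx_ne_tIdx, xIdx_ne_yIdx]

lemma vY_y (j k : Fin n) (p : Heis n) : vY j p (yIdx k) = if k = j then 1 else 0 := by
  simp [vY, Pi.single_apply, yIdx_ne_tIdx, yIdx_inj]

lemma vY_t (j : Fin n) (p : Heis n) : vY j p tIdx = -(2 * p (xIdx j)) := by
  simp [vY, Pi.single_apply, (yIdx_ne_tIdx j).symm]

lemma Xop_eq (j : Fin n) (u : Heis n → E) (p : Heis n) :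
    Xop j u p = fderiv ℝ u p (vX j p) := by
  simp only [Xop, pd, vX]
  rw [(fderiv ℝ u p).map_add, (fderiv ℝ u p).map_smul]

lemma Yop_eq (j : Fin n) (u : Heis n → E) (p : Heis n) :
    Yop j u p = fderiv ℝ u p (vY j p) := by
  simp only [Yop, pd, vY]
  rw [(fderiv ℝ u p).map_sub, (fderiv ℝ u p).map_smul]

lemma alpha_vX (j : Fin n) (p : Heis n) : alphaForm p (vX j p) = 0 := by
  have h1 : ∀ k, p (xIdx k) * vX j p (yIdx k) - p (yIdx k) * vX j p (xIdx k)
      = (if k = j then -p (yIdx k) else 0) := by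
    intro k; rw [vX_x, vX_y]; split <;> ring
  rw [alphaForm, vX_t, Finset.sum_congr rfl (fun k _ => h1 k),
    Finset.sum_ite_eq' Finset.univ j (fun k => -p (yIdx k))]
  simp

lemma alpha_vY (j : Fin n) (p : Heis n) : alphaForm p (vY j p) = 0 := by
  have h1 : ∀ k, p (xIdx k) * vY j p (yIdx k) - p (yIdx k) * vY j p (xIdx k)
      = (if k = j then p (xIdx k) else 0) := by
    intro k; rw [vY_x, vY_y]; split <;> ring
  rw [alphaForm, vY_t, Finset.sum_congr rfl (fun k _ => h1 k),
    Finset.sum_ite_eq' Finset.univ j (fun k => p (xIdx k))]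
  simp

lemma alpha_single_t (p : Heis n) : alphaForm p (Pi.single tIdx 1) = 1 := by
  simp [alphaForm, Pi.single_apply, (xIdx_ne_tIdx _).symm, (yIdx_ne_tIdx _).symm]

/-- Horizontal decomposition of a vector in the kernel of `α_q`. -/
lemma horiz_decomp (q w : Heis n) (hw : alphaForm q w = 0) :
    w = ∑ j, (w (xIdx j) • vX j q + w (yIdx j) • vY j q) := by
  funext i
  rw [Finset.sum_apply]
  rcases idx_cases i with ⟨k, rfl⟩ | ⟨k, rfl⟩ | rfl
  · have h1 : ∀ j, (w (xIdx j) • vX j q + w (yIdx j) • vY j q) (xIdx k)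
        = if k = j then w (xIdx j) else 0 := by
      intro j
      simp only [Pi.add_apply, Pi.smul_apply, vX_x, vY_x, smul_eq_mul]
      split <;> ring
    rw [Finset.sum_congr rfl fun j _ => h1 j,
      Finset.sum_ite_eq Finset.univ k (fun j => w (xIdx j))]
    simp
  · have h1 : ∀ j, (w (xIdx j) • vX j q + w (yIdx j) • vY j q) (yIdx k)
        = if k = j then w (yIdx j) else 0 := by
      intro j
      simp only [Pi.add_apply, Pi.smul_apply, vX_y, vY_y, smul_eq_mul]
      split <;> ring
    rw [Finset.sum_congr rfl fun j _ => h1 j,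
      Finset.sum_ite_eq Finset.univ k (fun j => w (yIdx j))]
    simp
  · have h1 : ∀ j, (w (xIdx j) • vX j q + w (yIdx j) • vY j q) tIdx
        = w (xIdx j) * (2 * q (yIdx j)) + w (yIdx j) * (-(2 * q (xIdx j))) := by
      intro j
      simp only [Pi.add_apply, Pi.smul_apply, vX_t, vY_t, smul_eq_mul]
    rw [Finset.sum_congr rfl fun j _ => h1 j]
    simp only [alphaForm] at hw
    have hsum : ∑ j, (w (xIdx j) * (2 * q (yIdx j)) + w (yIdx j) * (-(2 * q (xIdx j))))
        = -2 * ∑ j, (q (xIdx j) * w (yIdx j) - q (yIdx j) * w (xIdx j)) := by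
      rw [Finset.mul_sum]; apply Finset.sum_congr rfl; intro j _; ring
    rw [hsum]; linarith

/-- Derivative along a horizontal vector decomposes into the horizontal frame. -/
lemma fderiv_horiz (u : Heis n → E) (q w : Heis n) (hw : alphaForm q w = 0) :
    fderiv ℝ u q w = ∑ j, (w (xIdx j) • Xop j u q + w (yIdx j) • Yop j u q) := by
  have h : fderiv ℝ u q w = fderiv ℝ u q (∑ j, (w (xIdx j) • vX j q + w (yIdx j) • vY j q)) := by
    rw [← horiz_decomp q w hw]
  rw [h, map_sum]
  apply Finset.sum_congr rfl; intro j _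
  rw [(fderiv ℝ u q).map_add, (fderiv ℝ u q).map_smul, (fderiv ℝ u q).map_smul, Xop_eq, Yop_eq]

lemma pd_congr {i : Fin (2*n+1)} {u v : Heis n → E} {p : Heis n}
    (h : u =ᶠ[nhds p] v) : pd i u p = pd i v p := by
  unfold pd; rw [h.fderiv_eq]

end Aux2

section Aux3

variable {n : ℕ} {E : Type*} [NormedAddCommGroup E] [NormedSpace ℝ E]

lemma fderiv_apply_coord {F : Heis n → Heis n} {p : Heis n} (hFd : DifferentiableAt ℝ F p)
    (i : Fin (2*n+1)) (v : Heis n) :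
    fderiv ℝ (fun r => F r i) p v = fderiv ℝ F p v i := by
  have h : HasFDerivAt (fun r => F r i)
      ((ContinuousLinearMap.proj (R := ℝ) (φ := fun _ : Fin (2*n+1) => ℝ) i).comp
        (fderiv ℝ F p)) p :=
    ((ContinuousLinearMap.proj (R := ℝ) (φ := fun _ : Fin (2*n+1) => ℝ)
      i).hasFDerivAt).comp p hFd.hasFDerivAt
  rw [h.fderiv]
  rfl

/-- The contact chain rule along a horizontal vector. -/
lemma chain_horiz {U : Set (Heis n)} {F : Heis n → Heis n} {lam : Heis n → ℝ}
    (hc : ∀ p ∈ U, ∀ v : Heis n, alphaForm (F p) (fderiv ℝ F p v) = lam p * alphaForm p v)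
    {p : Heis n} (hp : p ∈ U) (hFd : DifferentiableAt ℝ F p)
    {u : Heis n → E} (hud : DifferentiableAt ℝ u (F p))
    (v : Heis n) (hv : alphaForm p v = 0) :
    fderiv ℝ (fun r => u (F r)) p v
      = ∑ j, ((fderiv ℝ F p v (xIdx j)) • Xop j u (F p)
          + (fderiv ℝ F p v (yIdx j)) • Yop j u (F p)) := by
  have hcomp : fderiv ℝ (fun r => u (F r)) p = (fderiv ℝ u (F p)).comp (fderiv ℝ F p) :=
    fderiv_comp p hud hFd
  have hw : alphaForm (F p) (fderiv ℝ F p v) = 0 := by rw [hc p hp v, hv, mul_zero]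
  calc fderiv ℝ (fun r => u (F r)) p v = fderiv ℝ u (F p) (fderiv ℝ F p v) := by
        rw [hcomp]; rfl
    _ = _ := fderiv_horiz u (F p) _ hw

lemma D0_xx {F : Heis n → Heis n} {p : Heis n} (hFd : DifferentiableAt ℝ F p) (j k : Fin n) :
    D0 F p (xH j) (xH k) = fderiv ℝ F p (vX k p) (xIdx j) := by
  show XYop (xH k) (fun q => F q (hIdx (xH j))) p = _
  rw [XYop_xH, hIdx_xH, Xop_eq, fderiv_apply_coord hFd]

lemma D0_yx {F : Heis n → Heis n} {p : Heis n} (hFd : DifferentiableAt ℝ F p) (j k : Fin n) :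
    D0 F p (yH j) (xH k) = fderiv ℝ F p (vX k p) (yIdx j) := by
  show XYop (xH k) (fun q => F q (hIdx (yH j))) p = _
  rw [XYop_xH, hIdx_yH, Xop_eq, fderiv_apply_coord hFd]

lemma D0_xy {F : Heis n → Heis n} {p : Heis n} (hFd : DifferentiableAt ℝ F p) (j k : Fin n) :
    D0 F p (xH j) (yH k) = fderiv ℝ F p (vY k p) (xIdx j) := by
  show XYop (yH k) (fun q => F q (hIdx (xH j))) p = _
  rw [XYop_yH, hIdx_xH, Yop_eq, fderiv_apply_coord hFd]

lemma D0_yy {F : Heis n → Heis n} {p : Heis n} (hFd : DifferentiableAt ℝ F p) (j k : Fin n) :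
    D0 F p (yH j) (yH k) = fderiv ℝ F p (vY k p) (yIdx j) := by
  show XYop (yH k) (fun q => F q (hIdx (yH j))) p = _
  rw [XYop_yH, hIdx_yH, Yop_eq, fderiv_apply_coord hFd]

end Aux3

section Aux4

variable {n : ℕ}

/-- The standard complex-structure matrix on the horizontal space. -/
def Jmat (n : ℕ) : Matrix (Fin (2*n)) (Fin (2*n)) ℝ :=
  Matrix.of fun a b =>
    if (a : ℕ) < n then (if (b : ℕ) = a + n then 1 else 0)
    else (if (b : ℕ) + n = a then -1 else 0)

lemma Jmat_xx (j k : Fin n) : Jmat n (xH j) (xH k) = 0 := by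
  have hj := j.2; have hk := k.2
  simp only [Jmat, Matrix.of_apply, xH]
  rw [if_pos hj, if_neg (by omega)]

lemma Jmat_xy (j k : Fin n) : Jmat n (xH j) (yH k) = if j = k then 1 else 0 := by
  have hj := j.2
  simp only [Jmat, Matrix.of_apply, xH, yH]
  rw [if_pos hj]
  by_cases h : j = k
  · subst h; rw [if_pos (by omega), if_pos rfl]
  · rw [if_neg (by simp only [Fin.ext_iff] at h; omega), if_neg h]

lemma Jmat_yx (j k : Fin n) : Jmat n (yH j) (xH k) = if j = k then -1 else 0 := by
  have hj := j.2
  simp only [Jmat, Matrix.of_apply, xH, yH]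
  rw [if_neg (by omega)]
  by_cases h : j = k
  · subst h; rw [if_pos (by omega), if_pos rfl]
  · rw [if_neg (by simp only [Fin.ext_iff] at h; omega), if_neg h]

lemma Jmat_yy (j k : Fin n) : Jmat n (yH j) (yH k) = 0 := by
  have hj := j.2; have hk := k.2
  simp only [Jmat, Matrix.of_apply, yH]
  rw [if_neg (by omega), if_neg (by omega)]

lemma Jmul_x (P : Matrix (Fin (2*n)) (Fin (2*n)) ℝ) (a : Fin n) (b : Fin (2*n)) :
    (Jmat n * P) (xH a) b = P (yH a) b := by
  rw [Matrix.mul_apply, sum_xy (fun s => Jmat n (xH a) s * P s b)]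
  have h1 : ∀ k, Jmat n (xH a) (xH k) * P (xH k) b = 0 := by
    intro k; rw [Jmat_xx]; ring
  have h2 : ∀ k, Jmat n (xH a) (yH k) * P (yH k) b
      = if a = k then P (yH k) b else 0 := by
    intro k; rw [Jmat_xy]; split <;> ring
  rw [Finset.sum_congr rfl fun k _ => h1 k, Finset.sum_congr rfl fun k _ => h2 k,
    Finset.sum_ite_eq Finset.univ a (fun k => P (yH k) b)]
  simp

lemma Jmul_y (P : Matrix (Fin (2*n)) (Fin (2*n)) ℝ) (a : Fin n) (b : Fin (2*n)) :
    (Jmat n * P) (yH a) b = -P (xH a) b := by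
  rw [Matrix.mul_apply, sum_xy (fun s => Jmat n (yH a) s * P s b)]
  have h1 : ∀ k, Jmat n (yH a) (xH k) * P (xH k) b
      = if a = k then -P (xH k) b else 0 := by
    intro k; rw [Jmat_yx]; split <;> ring
  have h2 : ∀ k, Jmat n (yH a) (yH k) * P (yH k) b = 0 := by
    intro k; rw [Jmat_yy]; ring
  rw [Finset.sum_congr rfl fun k _ => h1 k, Finset.sum_congr rfl fun k _ => h2 k,
    Finset.sum_ite_eq Finset.univ a (fun k => -P (xH k) b)]
  simp

lemma mulJ_x (P : Matrix (Fin (2*n)) (Fin (2*n)) ℝ) (a : Fin (2*n)) (k : Fin n) :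
    (P * Jmat n) a (xH k) = -P a (yH k) := by
  rw [Matrix.mul_apply, sum_xy (fun s => P a s * Jmat n s (xH k))]
  have h1 : ∀ j, P a (xH j) * Jmat n (xH j) (xH k) = 0 := by
    intro j; rw [Jmat_xx]; ring
  have h2 : ∀ j, P a (yH j) * Jmat n (yH j) (xH k)
      = if k = j then -P a (yH j) else 0 := by
    intro j; rw [Jmat_yx]
    by_cases h : j = k
    · subst h; rw [if_pos rfl, if_pos rfl]; ring
    · rw [if_neg h, if_neg (Ne.symm h)]; ring
  rw [Finset.sum_congr rfl fun j _ => h1 j, Finset.sum_congr rfl fun j _ => h2 j,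
    Finset.sum_ite_eq Finset.univ k (fun j => -P a (yH j))]
  simp

lemma mulJ_y (P : Matrix (Fin (2*n)) (Fin (2*n)) ℝ) (a : Fin (2*n)) (k : Fin n) :
    (P * Jmat n) a (yH k) = P a (xH k) := by
  rw [Matrix.mul_apply, sum_xy (fun s => P a s * Jmat n s (yH k))]
  have h1 : ∀ j, P a (xH j) * Jmat n (xH j) (yH k)
      = if k = j then P a (xH j) else 0 := by
    intro j; rw [Jmat_xy]
    by_cases h : j = k
    · subst h; rw [if_pos rfl, if_pos rfl]; ring
    · rw [if_neg h, if_neg (Ne.symm h)]; ring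
  have h2 : ∀ j, P a (yH j) * Jmat n (yH j) (yH k) = 0 := by
    intro j; rw [Jmat_yy]; ring
  rw [Finset.sum_congr rfl fun j _ => h1 j, Finset.sum_congr rfl fun j _ => h2 j,
    Finset.sum_ite_eq Finset.univ k (fun j => P a (xH j))]
  simp

lemma Jmat_transpose : (Jmat n)ᵀ = -Jmat n := by
  ext a b
  rcases finH_cases a with ⟨j, rfl⟩ | ⟨j, rfl⟩ <;> rcases finH_cases b with ⟨k, rfl⟩ | ⟨k, rfl⟩ <;>
    simp only [Matrix.transpose_apply, Matrix.neg_apply, Jmat_xx, Jmat_xy, Jmat_yx, Jmat_yy] <;>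
    [skip; skip; skip; skip]
  · ring
  · rw [show ∀ x y : ℝ, x = -y ↔ y = -x from fun x y => by constructor <;> intro h <;> linarith]
    by_cases h : j = k
    · subst h; simp
    · rw [if_neg h, if_neg (Ne.symm h)]; ring
  · by_cases h : j = k
    · subst h; simp
    · rw [if_neg h, if_neg (Ne.symm h)]; ring
  · ring

lemma Jmat_mul_Jmat : Jmat n * Jmat n = -1 := by
  ext a b
  rcases finH_cases a with ⟨j, rfl⟩ | ⟨j, rfl⟩
  · rw [Jmul_x]
    rcases finH_cases b with ⟨k, rfl⟩ | ⟨k, rfl⟩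
    · rw [Jmat_yx]
      simp only [Matrix.neg_apply, Matrix.one_apply]
      by_cases h : j = k
      · subst h; simp
      · rw [if_neg h, if_neg (by simp [xH_inj, h])]; ring
    · rw [Jmat_yy]
      simp [Matrix.one_apply, (xH_ne_yH j k)]
  · rw [Jmul_y]
    rcases finH_cases b with ⟨k, rfl⟩ | ⟨k, rfl⟩
    · rw [Jmat_xx]
      simp [Matrix.one_apply, Ne.symm (xH_ne_yH k j)]
    · rw [Jmat_xy]
      simp only [Matrix.neg_apply, Matrix.one_apply]
      by_cases h : j = k
      · subst h; simp
      · rw [if_neg h, if_neg (by simp [yH_inj, h])]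

/-- Conformal + symplectic implies commutation with `J`. -/
lemma conf_symp_comm (hn : 0 < n) (M : Matrix (Fin (2*n)) (Fin (2*n)) ℝ)
    (μ lamv : ℝ) (hμ : 0 < μ) (hl : 0 < lamv)
    (hMM : Mᵀ * M = μ • (1 : Matrix (Fin (2*n)) (Fin (2*n)) ℝ))
    (hS : Mᵀ * Jmat n * M = lamv • Jmat n) :
    Jmat n * M = M * Jmat n := by
  have hμ' : μ ≠ 0 := hμ.ne'
  have hleft : (μ⁻¹ • Mᵀ) * M = 1 := by
    rw [Matrix.smul_mul, hMM, smul_smul, inv_mul_cancel₀ hμ', one_smul]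
  have hright : M * (μ⁻¹ • Mᵀ) = 1 := mul_eq_one_comm.mp hleft
  have hMMt : M * Mᵀ = μ • (1 : Matrix (Fin (2*n)) (Fin (2*n)) ℝ) := by
    calc M * Mᵀ = μ • (M * (μ⁻¹ • Mᵀ)) := by
          rw [Matrix.mul_smul, smul_smul, mul_inv_cancel₀ hμ', one_smul]
      _ = μ • (1 : Matrix (Fin (2*n)) (Fin (2*n)) ℝ) := by rw [hright]
  have hstar : μ • (Jmat n * M) = lamv • (M * Jmat n) := by
    have h1 : M * (Mᵀ * Jmat n * M) = M * (lamv • Jmat n) := by rw [hS]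
    calc μ • (Jmat n * M) = (μ • (1:Matrix (Fin (2*n)) (Fin (2*n)) ℝ)) * (Jmat n * M) := by
          rw [Matrix.smul_mul, one_mul]
      _ = (M * Mᵀ) * (Jmat n * M) := by rw [hMMt]
      _ = M * (Mᵀ * Jmat n * M) := by noncomm_ring
      _ = M * (lamv • Jmat n) := h1
      _ = lamv • (M * Jmat n) := by rw [Matrix.mul_smul]
  -- scalar identity
  have hT1 : (Jmat n * M)ᵀ * (Jmat n * M) = μ • (1:Matrix (Fin (2*n)) (Fin (2*n)) ℝ) := by
    rw [Matrix.transpose_mul, Jmat_transpose]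
    calc Mᵀ * (-Jmat n) * (Jmat n * M) = -(Mᵀ * (Jmat n * Jmat n) * M) := by noncomm_ring
      _ = -(Mᵀ * (-1) * M) := by rw [Jmat_mul_Jmat]
      _ = Mᵀ * M := by noncomm_ring
      _ = _ := hMM
  have hT2 : (μ • (Jmat n * M))ᵀ * (μ • (Jmat n * M)) = (μ * μ * μ) • (1:Matrix (Fin (2*n)) (Fin (2*n)) ℝ) := by
    rw [Matrix.transpose_smul, Matrix.smul_mul, Matrix.mul_smul, hT1]
    rw [smul_smul, smul_smul]
  have hMJ : (M * Jmat n)ᵀ * (M * Jmat n) = μ • (1:Matrix (Fin (2*n)) (Fin (2*n)) ℝ) := by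
    rw [Matrix.transpose_mul, Jmat_transpose]
    calc (-Jmat n) * Mᵀ * (M * Jmat n) = -((Jmat n) * (Mᵀ * M) * Jmat n) := by noncomm_ring
      _ = -((Jmat n) * (μ • (1:Matrix (Fin (2*n)) (Fin (2*n)) ℝ)) * Jmat n) := by rw [hMM]
      _ = -(μ • (Jmat n * Jmat n)) := by
          rw [Matrix.mul_smul, Matrix.smul_mul, mul_one]
      _ = -(μ • (-1 : Matrix (Fin (2*n)) (Fin (2*n)) ℝ)) := by rw [Jmat_mul_Jmat]
      _ = μ • (1:Matrix (Fin (2*n)) (Fin (2*n)) ℝ) := by rw [smul_neg, neg_neg]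
  have hT3 : (lamv • (M * Jmat n))ᵀ * (lamv • (M * Jmat n))
      = (lamv * lamv * μ) • (1:Matrix (Fin (2*n)) (Fin (2*n)) ℝ) := by
    rw [Matrix.transpose_smul, Matrix.smul_mul, Matrix.mul_smul, hMJ, smul_smul, smul_smul]
  have hscal : (μ * μ * μ) • (1:Matrix (Fin (2*n)) (Fin (2*n)) ℝ)
      = (lamv * lamv * μ) • (1:Matrix (Fin (2*n)) (Fin (2*n)) ℝ) := by
    rw [← hT2, ← hT3, hstar]
  have hentry : μ * μ * μ = lamv * lamv * μ := by
    have := congrFun (congrFun hscal (xH ⟨0, hn⟩)) (xH ⟨0, hn⟩)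
    simpa [Matrix.smul_apply, Matrix.one_apply] using this
  have hsq : lamv * lamv = μ * μ :=
    mul_right_cancel₀ hμ' (by linarith [hentry])
  have hlm : lamv = μ := by nlinarith [hsq, hl, hμ]
  subst hlm
  have hcancel := congrArg (fun A => lamv⁻¹ • A) hstar
  simpa [smul_smul, inv_mul_cancel₀ hl.ne'] using hcancel

/-- Commutation with `J` passes to the inverse matrix. -/
lemma J_comm_inv (P Q : Matrix (Fin (2*n)) (Fin (2*n)) ℝ)
    (hPQ : P * Q = 1) (hQP : Q * P = 1) (h : Jmat n * P = P * Jmat n) :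
    Jmat n * Q = Q * Jmat n := by
  calc Jmat n * Q = (Q * P) * Jmat n * Q := by rw [hQP, one_mul]
    _ = Q * (P * Jmat n) * Q := by noncomm_ring
    _ = Q * (Jmat n * P) * Q := by rw [h]
    _ = Q * Jmat n * (P * Q) := by noncomm_ring
    _ = Q * Jmat n := by rw [hPQ, mul_one]

/-- The CR-type entry relations of a matrix commuting with `J`. -/
lemma comm_entries {P : Matrix (Fin (2*n)) (Fin (2*n)) ℝ}
    (h : Jmat n * P = P * Jmat n) (a b : Fin n) :
    P (yH a) (xH b) = -P (xH a) (yH b) ∧ P (yH a) (yH b) = P (xH a) (xH b) := by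
  constructor
  · have h1 := congrFun (congrFun h (xH a)) (xH b)
    rwa [Jmul_x, mulJ_x] at h1
  · have h2 := congrFun (congrFun h (xH a)) (yH b)
    rwa [Jmul_x, mulJ_y] at h2

end Aux4

section Aux5

variable {n : ℕ}

open ContinuousLinearMap in
/-- Differentiating the contact identity: the horizontal symplectic form is preserved
up to the factor `lam`. -/
lemma symp_sum {U : Set (Heis n)} {F : Heis n → Heis n} {lam : Heis n → ℝ}
    (hU : IsOpen U) (hF : ContDiffOn ℝ 2 F U)
    (hct : ∀ r ∈ U, ∀ v : Heis n, alphaForm (F r) (fderiv ℝ F r v) = lam r * alphaForm r v)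
    {p : Heis n} (hp : p ∈ U) (ξ η : Heis n) (hξ : alphaForm p ξ = 0)
    (hη : alphaForm p η = 0) :
    ∑ j, (fderiv ℝ F p η (xIdx j) * fderiv ℝ F p ξ (yIdx j)
        - fderiv ℝ F p η (yIdx j) * fderiv ℝ F p ξ (xIdx j))
      = lam p * ∑ j, (η (xIdx j) * ξ (yIdx j) - η (yIdx j) * ξ (xIdx j)) := by
  have hmem := hU.mem_nhds hp
  have hca : ContDiffAt ℝ 2 F p := hF.contDiffAt hmem
  have hFd : DifferentiableAt ℝ F p := hca.differentiableAt two_ne_zero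
  have hDF1 : ContDiffOn ℝ 1 (fderiv ℝ F) U := hF.fderiv_of_isOpen hU le_rfl
  have hD2 : DifferentiableAt ℝ (fderiv ℝ F) p :=
    ((hDF1 p hp).contDiffAt hmem).differentiableAt one_ne_zero
  have hsymm : ∀ v w, fderiv ℝ (fderiv ℝ F) p v w = fderiv ℝ (fderiv ℝ F) p w v :=
    fun v w => hca.isSymmSndFDerivAt (by simp [minSmoothness_of_isRCLikeNormedField]) v w
  -- building blocks
  have hval : ∀ (v : Heis n) (i : Fin (2*n+1)),
      HasFDerivAt (fun r => fderiv ℝ F r v i)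
        ((ContinuousLinearMap.proj (R := ℝ) (φ := fun _ : Fin (2*n+1) => ℝ) i).comp
          ((ContinuousLinearMap.apply ℝ (Heis n) v).comp (fderiv ℝ (fderiv ℝ F) p))) p := by
    intro v i
    exact ((ContinuousLinearMap.proj (R := ℝ) (φ := fun _ : Fin (2*n+1) => ℝ)
      i).hasFDerivAt).comp p
      (((ContinuousLinearMap.apply ℝ (Heis n) v).hasFDerivAt).comp p hD2.hasFDerivAt)
  have hcoord : ∀ (i : Fin (2*n+1)), HasFDerivAt (fun r => F r i)
      ((ContinuousLinearMap.proj (R := ℝ) (φ := fun _ : Fin (2*n+1) => ℝ) i).comp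
        (fderiv ℝ F p)) p := fun i =>
    ((ContinuousLinearMap.proj (R := ℝ) (φ := fun _ : Fin (2*n+1) => ℝ)
      i).hasFDerivAt).comp p hFd.hasFDerivAt
  have hproj : ∀ (i : Fin (2*n+1)), HasFDerivAt (fun r : Heis n => r i)
      (ContinuousLinearMap.proj (R := ℝ) (φ := fun _ : Fin (2*n+1) => ℝ) i) p :=
    fun i => (ContinuousLinearMap.proj (R := ℝ) (φ := fun _ : Fin (2*n+1) => ℝ)
      i).hasFDerivAt
  have hAtp : alphaForm (F p) (fderiv ℝ F p (Pi.single tIdx 1)) = lam p := by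
    rw [hct p hp, alpha_single_t, mul_one]
  -- the main evaluated identity
  have key : ∀ ζ θ : Heis n, alphaForm p ζ = 0 →
      fderiv ℝ (fderiv ℝ F) p θ ζ tIdx
        + 2 * ∑ j, (F p (xIdx j) * fderiv ℝ (fderiv ℝ F) p θ ζ (yIdx j)
            + fderiv ℝ F p ζ (yIdx j) * fderiv ℝ F p θ (xIdx j)
            - (F p (yIdx j) * fderiv ℝ (fderiv ℝ F) p θ ζ (xIdx j)
              + fderiv ℝ F p ζ (xIdx j) * fderiv ℝ F p θ (yIdx j)))
        - lam p * (2 * ∑ j, (ζ (yIdx j) * θ (xIdx j) - ζ (xIdx j) * θ (yIdx j))) = 0 := by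
    intro ζ θ hζ0
    have h1 : HasFDerivAt (fun r => alphaForm (F r) (fderiv ℝ F r ζ)) _ p :=
      (hval ζ tIdx).add ((HasFDerivAt.fun_sum (fun j (_ : j ∈ Finset.univ) =>
        ((hcoord (xIdx j)).fun_mul (hval ζ (yIdx j))).fun_sub
          ((hcoord (yIdx j)).fun_mul (hval ζ (xIdx j))))).const_mul 2)
    have h2 : HasFDerivAt (fun r => alphaForm (F r) (fderiv ℝ F r (Pi.single tIdx 1))) _ p :=
      (hval (Pi.single tIdx 1) tIdx).add ((HasFDerivAt.fun_sum (fun j (_ : j ∈ Finset.univ) =>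
        ((hcoord (xIdx j)).fun_mul (hval (Pi.single tIdx 1) (yIdx j))).fun_sub
          ((hcoord (yIdx j)).fun_mul (hval (Pi.single tIdx 1) (xIdx j))))).const_mul 2)
    have h3 : HasFDerivAt (fun r => alphaForm r ζ) _ p :=
      (hasFDerivAt_const (ζ tIdx) p).add ((HasFDerivAt.fun_sum (fun j (_ : j ∈ Finset.univ) =>
        ((hproj (xIdx j)).mul_const (ζ (yIdx j))).fun_sub
          ((hproj (yIdx j)).mul_const (ζ (xIdx j))))).const_mul 2)
    have hPhi := h1.fun_sub (h2.fun_mul h3)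
    have hz : fderiv ℝ (fun r => alphaForm (F r) (fderiv ℝ F r ζ)
        - alphaForm (F r) (fderiv ℝ F r (Pi.single tIdx 1)) * alphaForm r ζ) p = 0 := by
      have h0 : (fun r => alphaForm (F r) (fderiv ℝ F r ζ)
          - alphaForm (F r) (fderiv ℝ F r (Pi.single tIdx 1)) * alphaForm r ζ)
          =ᶠ[nhds p] (fun _ => (0:ℝ)) := by
        filter_upwards [hmem] with r hr
        rw [hct r hr ζ, hct r hr (Pi.single tIdx 1), alpha_single_t, mul_one]
        ring
      rw [h0.fderiv_eq]
      exact fderiv_const_apply 0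
    have hev := DFunLike.congr_fun (hPhi.fderiv.symm.trans hz) θ
    simp only [ContinuousLinearMap.add_apply, ContinuousLinearMap.coe_sub',
      Pi.sub_apply, ContinuousLinearMap.coe_comp', Function.comp_apply,
      ContinuousLinearMap.proj_apply, ContinuousLinearMap.apply_apply,
      ContinuousLinearMap.coe_smul', Pi.smul_apply, ContinuousLinearMap.sum_apply,
      ContinuousLinearMap.smul_apply, smul_eq_mul, ContinuousLinearMap.zero_apply,
      hAtp, hζ0, mul_zero, zero_mul, add_zero] at hev
    linear_combination hev
  have key1 := key ξ η hξ
  have key2 := key η ξ hη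
  rw [show fderiv ℝ (fderiv ℝ F) p ξ η = fderiv ℝ (fderiv ℝ F) p η ξ from hsymm ξ η] at key2
  have hS : (∑ j, (F p (xIdx j) * fderiv ℝ (fderiv ℝ F) p η ξ (yIdx j)
        + fderiv ℝ F p ξ (yIdx j) * fderiv ℝ F p η (xIdx j)
        - (F p (yIdx j) * fderiv ℝ (fderiv ℝ F) p η ξ (xIdx j)
          + fderiv ℝ F p ξ (xIdx j) * fderiv ℝ F p η (yIdx j))))
      - (∑ j, (F p (xIdx j) * fderiv ℝ (fderiv ℝ F) p η ξ (yIdx j)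
        + fderiv ℝ F p η (yIdx j) * fderiv ℝ F p ξ (xIdx j)
        - (F p (yIdx j) * fderiv ℝ (fderiv ℝ F) p η ξ (xIdx j)
          + fderiv ℝ F p η (xIdx j) * fderiv ℝ F p ξ (yIdx j))))
      = 2 * ∑ j, (fderiv ℝ F p η (xIdx j) * fderiv ℝ F p ξ (yIdx j)
          - fderiv ℝ F p η (yIdx j) * fderiv ℝ F p ξ (xIdx j)) := by
    rw [← Finset.sum_sub_distrib, Finset.mul_sum]
    exact Finset.sum_congr rfl fun j _ => by ring
  have hT : (∑ j, (ξ (yIdx j) * η (xIdx j) - ξ (xIdx j) * η (yIdx j)))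
      - (∑ j, (η (yIdx j) * ξ (xIdx j) - η (xIdx j) * ξ (yIdx j)))
      = 2 * ∑ j, (η (xIdx j) * ξ (yIdx j) - η (yIdx j) * ξ (xIdx j)) := by
    rw [← Finset.sum_sub_distrib, Finset.mul_sum]
    exact Finset.sum_congr rfl fun j _ => by ring
  linear_combination key1 / 4 - key2 / 4 - hS / 2 + (lam p / 2) * hT


lemma D0_col_x {F : Heis n → Heis n} {p : Heis n}
    (hFd : DifferentiableAt ℝ F p) (k : Fin n) (m : Fin (2*n)) :
    D0 F p m (xH k) = fderiv ℝ F p (vX k p) (hIdx m) := by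
  rcases finH_cases m with ⟨j, rfl⟩ | ⟨j, rfl⟩
  · rw [D0_xx hFd, hIdx_xH]
  · rw [D0_yx hFd, hIdx_yH]

lemma D0_col_y {F : Heis n → Heis n} {p : Heis n}
    (hFd : DifferentiableAt ℝ F p) (k : Fin n) (m : Fin (2*n)) :
    D0 F p m (yH k) = fderiv ℝ F p (vY k p) (hIdx m) := by
  rcases finH_cases m with ⟨j, rfl⟩ | ⟨j, rfl⟩
  · rw [D0_xy hFd, hIdx_xH]
  · rw [D0_yy hFd, hIdx_yH]

lemma symp_entry {U : Set (Heis n)} {F : Heis n → Heis n} {lam : Heis n → ℝ}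
    (hU : IsOpen U) (hF : ContDiffOn ℝ 2 F U)
    (hct : ∀ r ∈ U, ∀ v : Heis n, alphaForm (F r) (fderiv ℝ F r v) = lam r * alphaForm r v)
    {p : Heis n} (hp : p ∈ U) {a b : Fin (2*n)} (va vb : Heis n)
    (hva : alphaForm p va = 0) (hvb : alphaForm p vb = 0)
    (hA : ∀ m : Fin (2*n), D0 F p m a = fderiv ℝ F p va (hIdx m))
    (hB : ∀ m : Fin (2*n), D0 F p m b = fderiv ℝ F p vb (hIdx m)) :
    ((D0 F p)ᵀ * Jmat n * D0 F p) a b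
      = lam p * ∑ j, (va (xIdx j) * vb (yIdx j) - va (yIdx j) * vb (xIdx j)) := by
  rw [Matrix.mul_assoc, Matrix.mul_apply]
  have hsplit : ∑ r, (D0 F p)ᵀ a r * (Jmat n * D0 F p) r b
      = ∑ k, fderiv ℝ F p va (xIdx k) * fderiv ℝ F p vb (yIdx k)
        - ∑ k, fderiv ℝ F p va (yIdx k) * fderiv ℝ F p vb (xIdx k) := by
    rw [sum_xy (fun r => (D0 F p)ᵀ a r * (Jmat n * D0 F p) r b)]
    have e1 : ∑ k : Fin n, (D0 F p)ᵀ a (xH k) * (Jmat n * D0 F p) (xH k) b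
        = ∑ k, fderiv ℝ F p va (xIdx k) * fderiv ℝ F p vb (yIdx k) := by
      apply Finset.sum_congr rfl; intro k _
      rw [Matrix.transpose_apply, Jmul_x, hA (xH k), hB (yH k), hIdx_xH, hIdx_yH]
    have e2 : ∑ k : Fin n, (D0 F p)ᵀ a (yH k) * (Jmat n * D0 F p) (yH k) b
        = ∑ k, -(fderiv ℝ F p va (yIdx k) * fderiv ℝ F p vb (xIdx k)) := by
      apply Finset.sum_congr rfl; intro k _
      rw [Matrix.transpose_apply, Jmul_y, hA (yH k), hB (xH k), hIdx_yH, hIdx_xH]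
      ring
    rw [e1, e2, Finset.sum_neg_distrib]
    ring
  rw [hsplit, ← Finset.sum_sub_distrib]
  exact symp_sum hU hF hct hp vb va hvb hva

lemma omega_xx (a b : Fin n) (p : Heis n) :
    ∑ j, (vX a p (xIdx j) * vX b p (yIdx j) - vX a p (yIdx j) * vX b p (xIdx j)) = 0 := by
  apply Finset.sum_eq_zero; intro j _; rw [vX_y, vX_y]; ring

lemma omega_yy (a b : Fin n) (p : Heis n) :
    ∑ j, (vY a p (xIdx j) * vY b p (yIdx j) - vY a p (yIdx j) * vY b p (xIdx j)) = 0 := by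
  apply Finset.sum_eq_zero; intro j _; rw [vY_x, vY_x]; ring

lemma omega_xy (a b : Fin n) (p : Heis n) :
    ∑ j, (vX a p (xIdx j) * vY b p (yIdx j) - vX a p (yIdx j) * vY b p (xIdx j))
      = if a = b then 1 else 0 := by
  have h1 : ∀ j, vX a p (xIdx j) * vY b p (yIdx j) - vX a p (yIdx j) * vY b p (xIdx j)
      = if a = j then (if j = b then 1 else 0) else 0 := by
    intro j; rw [vX_x, vX_y, vY_x, vY_y]
    by_cases h : j = a
    · subst h; rw [if_pos rfl, if_pos rfl]; ring
    · rw [if_neg h, if_neg (Ne.symm h)]; ring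
  rw [Finset.sum_congr rfl fun j _ => h1 j,
    Finset.sum_ite_eq Finset.univ a (fun j => if j = b then 1 else 0)]
  simp

lemma omega_yx (a b : Fin n) (p : Heis n) :
    ∑ j, (vY a p (xIdx j) * vX b p (yIdx j) - vY a p (yIdx j) * vX b p (xIdx j))
      = if a = b then -1 else 0 := by
  have h1 : ∀ j, vY a p (xIdx j) * vX b p (yIdx j) - vY a p (yIdx j) * vX b p (xIdx j)
      = if a = j then (if j = b then -1 else 0) else 0 := by
    intro j; rw [vY_x, vY_y, vX_x, vX_y]
    by_cases h : j = a
    · subst h; rw [if_pos rfl]; split <;> simp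
    · rw [if_neg h, if_neg (Ne.symm h)]; ring
  rw [Finset.sum_congr rfl fun j _ => h1 j,
    Finset.sum_ite_eq Finset.univ a (fun j => if j = b then -1 else 0)]
  simp

/-- The symplectic matrix identity for a contact `C²` map. -/
lemma symp_matrix {U : Set (Heis n)} {F : Heis n → Heis n} {lam : Heis n → ℝ}
    (hU : IsOpen U) (hF : ContDiffOn ℝ 2 F U)
    (hct : ∀ r ∈ U, ∀ v : Heis n, alphaForm (F r) (fderiv ℝ F r v) = lam r * alphaForm r v)
    {p : Heis n} (hp : p ∈ U) :
    (D0 F p)ᵀ * Jmat n * D0 F p = lam p • Jmat n := by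
  have hFd : DifferentiableAt ℝ F p :=
    (hF.contDiffAt (hU.mem_nhds hp)).differentiableAt two_ne_zero
  ext a b
  rcases finH_cases a with ⟨j, rfl⟩ | ⟨j, rfl⟩ <;> rcases finH_cases b with ⟨k, rfl⟩ | ⟨k, rfl⟩
  · rw [symp_entry hU hF hct hp (vX j p) (vX k p) (alpha_vX j p) (alpha_vX k p)
      (D0_col_x hFd j) (D0_col_x hFd k), omega_xx, Matrix.smul_apply, Jmat_xx, smul_eq_mul,
      mul_zero]
  · rw [symp_entry hU hF hct hp (vX j p) (vY k p) (alpha_vX j p) (alpha_vY k p)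
      (D0_col_x hFd j) (D0_col_y hFd k), omega_xy, Matrix.smul_apply, Jmat_xy, smul_eq_mul]
  · rw [symp_entry hU hF hct hp (vY j p) (vX k p) (alpha_vY j p) (alpha_vX k p)
      (D0_col_y hFd j) (D0_col_x hFd k), omega_yx, Matrix.smul_apply, Jmat_yx, smul_eq_mul]
  · rw [symp_entry hU hF hct hp (vY j p) (vY k p) (alpha_vY j p) (alpha_vY k p)
      (D0_col_y hFd j) (D0_col_y hFd k), omega_yy, Matrix.smul_apply, Jmat_yy, smul_eq_mul,
      mul_zero]


/-- A general "model" horizontal-type differential operator `∂_a + (c·r_b)∂_t`. -/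
def Dop (a : Fin (2*n+1)) (c : ℝ) (b : Fin (2*n+1)) (u : Heis n → ℝ) (p : Heis n) : ℝ :=
  pd a u p + (c * p b) * pd tIdx u p

lemma Xop_Dop (k : Fin n) :
    (Xop k : (Heis n → ℝ) → Heis n → ℝ) = Dop (xIdx k) 2 (yIdx k) := by
  funext u p; simp [Xop, Dop, smul_eq_mul]

lemma Yop_Dop (k : Fin n) :
    (Yop k : (Heis n → ℝ) → Heis n → ℝ) = Dop (yIdx k) (-2) (xIdx k) := by
  funext u p; simp [Yop, Dop, smul_eq_mul]; ring

lemma Tvf_Dop (j0 : Fin n) :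
    (Tvf : (Heis n → ℝ) → Heis n → ℝ) = Dop tIdx 0 (xIdx j0) := by
  funext u p; simp [Tvf, Dop]

lemma Xtilde_Dop (j : Fin n) :
    (Xtilde j : (Heis n → ℝ) → Heis n → ℝ) = Dop (xIdx j) (-2) (yIdx j) := by
  funext u p; simp [Xtilde, Xop, Tvf, Dop, smul_eq_mul]; ring

lemma Ytilde_Dop (j : Fin n) :
    (Ytilde j : (Heis n → ℝ) → Heis n → ℝ) = Dop (yIdx j) 2 (xIdx j) := by
  funext u p; simp [Ytilde, Yop, Tvf, Dop, smul_eq_mul]; ring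

/-- Commutation of two model operators on a `C²` function. -/
lemma Dop_comm {q : Heis n} (a a' b b' : Fin (2*n+1)) (c c' : ℝ)
    (hb : b ≠ tIdx) (hb' : b' ≠ tIdx)
    (hcc : c' * (if b' = a then (1:ℝ) else 0) = c * (if b = a' then 1 else 0))
    {u : Heis n → ℝ} (hu : ContDiffAt ℝ 2 u q) :
    Dop a c b (Dop a' c' b' u) q = Dop a' c' b' (Dop a c b u) q := by
  have hdf : DifferentiableAt ℝ (fderiv ℝ u) q :=
    (hu.fderiv_right (m := 1) (by norm_num)).differentiableAt one_ne_zero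
  have hpd : ∀ i : Fin (2*n+1), DifferentiableAt ℝ (fun r => pd i u r) q := by
    intro i
    exact (ContinuousLinearMap.apply ℝ ℝ
      ((Pi.single i 1 : Heis n))).differentiableAt.comp q hdf
  have hH : ∀ a1 a2 : Fin (2*n+1), pd a1 (fun r => pd a2 u r) q
      = fderiv ℝ (fderiv ℝ u) q (Pi.single a1 1) (Pi.single a2 1) := by
    intro a1 a2
    have h : HasFDerivAt (fun r => fderiv ℝ u r (Pi.single a2 1))
        ((ContinuousLinearMap.apply ℝ ℝ ((Pi.single a2 1 : Heis n))).comp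
          (fderiv ℝ (fderiv ℝ u) q)) q :=
      ((ContinuousLinearMap.apply ℝ ℝ
        ((Pi.single a2 1 : Heis n))).hasFDerivAt).comp q hdf.hasFDerivAt
    show pd a1 (fun r => fderiv ℝ u r (Pi.single a2 1)) q = _
    rw [pd, h.fderiv]; rfl
  have hlind : ∀ (c0 : ℝ) (b0 : Fin (2*n+1)),
      DifferentiableAt ℝ (fun r : Heis n => c0 * r b0) q := by
    intro c0 b0
    exact ((ContinuousLinearMap.proj (R := ℝ) (φ := fun _ : Fin (2*n+1) => ℝ)
      b0).differentiableAt).const_mul c0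
  have hlinv : ∀ (c0 : ℝ) (b0 i : Fin (2*n+1)),
      fderiv ℝ (fun r : Heis n => c0 * r b0) q (Pi.single i 1)
        = c0 * (if b0 = i then 1 else 0) := by
    intro c0 b0 i
    have h : HasFDerivAt (fun r : Heis n => c0 * r b0)
        (c0 • (ContinuousLinearMap.proj (R := ℝ) (φ := fun _ : Fin (2*n+1) => ℝ) b0)) q :=
      ((ContinuousLinearMap.proj (R := ℝ) (φ := fun _ : Fin (2*n+1) => ℝ)
        b0).hasFDerivAt).const_mul c0
    rw [h.fderiv]
    simp [Pi.single_apply]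
  have hprod : ∀ (c0 : ℝ) (b0 i : Fin (2*n+1)),
      pd i (fun r => (c0 * r b0) * pd tIdx u r) q
        = c0 * (if b0 = i then 1 else 0) * pd tIdx u q
          + (c0 * q b0) * pd i (fun r => pd tIdx u r) q := by
    intro c0 b0 i
    show fderiv ℝ (fun r => (c0 * r b0) * pd tIdx u r) q (Pi.single i 1) = _
    rw [fderiv_fun_mul (hlind c0 b0) (hpd tIdx)]
    rw [ContinuousLinearMap.add_apply, ContinuousLinearMap.smul_apply,
      ContinuousLinearMap.smul_apply, smul_eq_mul, smul_eq_mul, hlinv]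
    show c0 * q b0 * pd i (fun r => pd tIdx u r) q + pd tIdx u q * (c0 * if b0 = i then 1 else 0) = _
    ring
  have hsum : ∀ (c0 : ℝ) (b0 i : Fin (2*n+1)),
      pd i (fun r => pd a' u r + (c0 * r b0) * pd tIdx u r) q
        = pd i (fun r => pd a' u r) q + pd i (fun r => (c0 * r b0) * pd tIdx u r) q := by
    intro c0 b0 i
    show fderiv ℝ (fun r => pd a' u r + (c0 * r b0) * pd tIdx u r) q (Pi.single i 1) = _
    rw [fderiv_fun_add (hpd a') ((hlind c0 b0).fun_mul (hpd tIdx))]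
    rfl
  have hsum2 : ∀ (c0 : ℝ) (b0 i : Fin (2*n+1)),
      pd i (fun r => pd a u r + (c0 * r b0) * pd tIdx u r) q
        = pd i (fun r => pd a u r) q + pd i (fun r => (c0 * r b0) * pd tIdx u r) q := by
    intro c0 b0 i
    show fderiv ℝ (fun r => pd a u r + (c0 * r b0) * pd tIdx u r) q (Pi.single i 1) = _
    rw [fderiv_fun_add (hpd a) ((hlind c0 b0).fun_mul (hpd tIdx))]
    rfl
  have hsymm : ∀ v w : Heis n, fderiv ℝ (fderiv ℝ u) q v w = fderiv ℝ (fderiv ℝ u) q w v :=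
    fun v w => hu.isSymmSndFDerivAt (by simp [minSmoothness_of_isRCLikeNormedField]) v w
  show pd a (fun r => Dop a' c' b' u r) q + (c * q b) * pd tIdx (fun r => Dop a' c' b' u r) q
      = pd a' (fun r => Dop a c b u r) q + (c' * q b') * pd tIdx (fun r => Dop a c b u r) q
  have e1 : (fun r => Dop a' c' b' u r) = fun r => pd a' u r + (c' * r b') * pd tIdx u r := rfl
  have e2 : (fun r => Dop a c b u r) = fun r => pd a u r + (c * r b) * pd tIdx u r := rfl
  rw [e1, e2, hsum c' b' a, hsum c' b' tIdx, hsum2 c b a', hsum2 c b tIdx,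
    hprod c' b' a, hprod c' b' tIdx, hprod c b a', hprod c b tIdx,
    hH a a', hH tIdx a', hH a' a, hH tIdx a, hH a tIdx, hH a' tIdx, hH tIdx tIdx,
    if_neg hb', if_neg hb]
  linear_combination hsymm (Pi.single a 1) (Pi.single a' 1)
    + pd tIdx u q * hcc
    + (c' * q b') * hsymm (Pi.single a 1) (Pi.single tIdx 1)
    + (c * q b) * hsymm (Pi.single tIdx 1) (Pi.single a' 1)


/-- The right-invariant fields commute with the left-invariant horizontal fields. -/
lemma Wt_comm {Wt : (Heis n → ℝ) → Heis n → ℝ}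
    (hWt : Wt = Tvf ∨ (∃ j : Fin n, Wt = Xtilde j) ∨ (∃ j : Fin n, Wt = Ytilde j))
    (j0 : Fin n) {u : Heis n → ℝ} {q : Heis n} (hu : ContDiffAt ℝ 2 u q) (k : Fin n) :
    Xop k (Wt u) q = Wt (Xop k u) q ∧ Yop k (Wt u) q = Wt (Yop k u) q := by
  rcases hWt with rfl | ⟨j, rfl⟩ | ⟨j, rfl⟩
  · rw [Tvf_Dop j0, Xop_Dop k, Yop_Dop k]
    constructor
    · exact Dop_comm _ _ _ _ _ _ (yIdx_ne_tIdx k) (xIdx_ne_tIdx j0)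
        (by rw [if_neg (yIdx_ne_tIdx k)]; ring) hu
    · exact Dop_comm _ _ _ _ _ _ (xIdx_ne_tIdx k) (xIdx_ne_tIdx j0)
        (by rw [if_neg (xIdx_ne_tIdx k)]; ring) hu
  · rw [Xtilde_Dop j, Xop_Dop k, Yop_Dop k]
    constructor
    · exact Dop_comm _ _ _ _ _ _ (yIdx_ne_tIdx k) (yIdx_ne_tIdx j)
        (by rw [if_neg (Ne.symm (xIdx_ne_yIdx k j)), if_neg (Ne.symm (xIdx_ne_yIdx j k))]; ring) hu
    · exact Dop_comm _ _ _ _ _ _ (xIdx_ne_tIdx k) (yIdx_ne_tIdx j)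
        (by simp only [yIdx_inj, xIdx_inj]
            by_cases h : j = k
            · subst h; simp
            · rw [if_neg h, if_neg (Ne.symm h)]) hu
  · rw [Ytilde_Dop j, Xop_Dop k, Yop_Dop k]
    constructor
    · exact Dop_comm _ _ _ _ _ _ (yIdx_ne_tIdx k) (xIdx_ne_tIdx j)
        (by simp only [yIdx_inj, xIdx_inj]
            by_cases h : j = k
            · subst h; simp
            · rw [if_neg h, if_neg (Ne.symm h)]) hu
    · exact Dop_comm _ _ _ _ _ _ (xIdx_ne_tIdx k) (xIdx_ne_tIdx j)
        (by rw [if_neg (xIdx_ne_yIdx j k), if_neg (xIdx_ne_yIdx k j)]; ring) hu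


lemma Xop_congr {u v : Heis n → E} {p : Heis n} (h : u =ᶠ[nhds p] v) (j : Fin n) :
    Xop j u p = Xop j v p := by
  unfold Xop; rw [pd_congr h, pd_congr h]

lemma Yop_congr {u v : Heis n → E} {p : Heis n} (h : u =ᶠ[nhds p] v) (j : Fin n) :
    Yop j u p = Yop j v p := by
  unfold Yop; rw [pd_congr h, pd_congr h]

lemma XYop_congr {u v : Heis n → E} {p : Heis n} (h : u =ᶠ[nhds p] v) (m : Fin (2*n)) :
    XYop m u p = XYop m v p := by
  rcases finH_cases m with ⟨j, rfl⟩ | ⟨j, rfl⟩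
  · rw [XYop_xH, XYop_xH]; exact Xop_congr h j
  · rw [XYop_yH, XYop_yH]; exact Yop_congr h j

lemma Wt_congr {Wt : (Heis n → ℝ) → Heis n → ℝ}
    (hWt : Wt = Tvf ∨ (∃ j : Fin n, Wt = Xtilde j) ∨ (∃ j : Fin n, Wt = Ytilde j))
    {u v : Heis n → ℝ} {q : Heis n} (h : u =ᶠ[nhds q] v) : Wt u q = Wt v q := by
  rcases hWt with rfl | ⟨j, rfl⟩ | ⟨j, rfl⟩
  · exact pd_congr h
  · unfold Xtilde Tvf; rw [Xop_congr h, pd_congr h]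
  · unfold Ytilde Tvf; rw [Yop_congr h, pd_congr h]

lemma pd_neg {u : Heis n → ℝ} {p : Heis n} (i : Fin (2*n+1)) :
    pd i (fun r => -u r) p = -pd i u p := by
  unfold pd; rw [fderiv_fun_neg]; rfl

lemma Wt_neg {Wt : (Heis n → ℝ) → Heis n → ℝ}
    (hWt : Wt = Tvf ∨ (∃ j : Fin n, Wt = Xtilde j) ∨ (∃ j : Fin n, Wt = Ytilde j))
    {u : Heis n → ℝ} {q : Heis n} : Wt (fun r => -u r) q = -Wt u q := by
  rcases hWt with rfl | ⟨j, rfl⟩ | ⟨j, rfl⟩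
  · exact pd_neg tIdx
  · unfold Xtilde Xop Tvf; rw [pd_neg, pd_neg]; simp [smul_eq_mul]; ring
  · unfold Ytilde Yop Tvf; rw [pd_neg, pd_neg]; simp [smul_eq_mul]; ring

/-- `D₀` of the identity-like coordinate functions. -/
lemma XYop_coord (a b : Fin (2*n)) (p : Heis n) :
    XYop b (fun r : Heis n => r (hIdx a)) p
      = (1 : Matrix (Fin (2*n)) (Fin (2*n)) ℝ) a b := by
  have hfd : ∀ i : Fin (2*n+1), fderiv ℝ (fun r : Heis n => r i) p
      = ContinuousLinearMap.proj (R := ℝ) (φ := fun _ : Fin (2*n+1) => ℝ) i := by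
    intro i
    exact (ContinuousLinearMap.proj (R := ℝ) (φ := fun _ : Fin (2*n+1) => ℝ) i).fderiv
  rcases finH_cases b with ⟨k, rfl⟩ | ⟨k, rfl⟩
  · rw [XYop_xH, Xop_eq, hfd]
    rcases finH_cases a with ⟨j, rfl⟩ | ⟨j, rfl⟩
    · show vX k p (xIdx j) = _
      rw [vX_x, Matrix.one_apply]
      by_cases h : j = k
      · subst h; rw [if_pos rfl, if_pos rfl]
      · rw [if_neg h, if_neg (by simp [xH_inj, h])]
    · show vX k p (yIdx j) = _
      rw [vX_y, Matrix.one_apply, if_neg (Ne.symm (xH_ne_yH k j))]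
  · rw [XYop_yH, Yop_eq, hfd]
    rcases finH_cases a with ⟨j, rfl⟩ | ⟨j, rfl⟩
    · show vY k p (xIdx j) = _
      rw [vY_x, Matrix.one_apply, if_neg (xH_ne_yH j k)]
    · show vY k p (yIdx j) = _
      rw [vY_y, Matrix.one_apply]
      by_cases h : j = k
      · subst h; rw [if_pos rfl, if_pos rfl]
      · rw [if_neg h, if_neg (by simp [yH_inj, h])]

/-- Contact chain rule for `X_k` in matrix-entry form. -/
lemma chainX {U : Set (Heis n)} {F : Heis n → Heis n} {lam : Heis n → ℝ}
    (hct : ∀ r ∈ U, ∀ v : Heis n, alphaForm (F r) (fderiv ℝ F r v) = lam r * alphaForm r v)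
    {p : Heis n} (hp : p ∈ U) (hFd : DifferentiableAt ℝ F p)
    {u : Heis n → E} (hud : DifferentiableAt ℝ u (F p)) (k : Fin n) :
    Xop k (fun r => u (F r)) p
      = ∑ j, ((D0 F p (xH j) (xH k)) • Xop j u (F p)
          + (D0 F p (yH j) (xH k)) • Yop j u (F p)) := by
  rw [Xop_eq, chain_horiz hct hp hFd hud _ (alpha_vX k p)]
  apply Finset.sum_congr rfl; intro j _
  rw [D0_col_x hFd k (xH j), D0_col_x hFd k (yH j), hIdx_xH, hIdx_yH]

lemma chainY {U : Set (Heis n)} {F : Heis n → Heis n} {lam : Heis n → ℝ}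
    (hct : ∀ r ∈ U, ∀ v : Heis n, alphaForm (F r) (fderiv ℝ F r v) = lam r * alphaForm r v)
    {p : Heis n} (hp : p ∈ U) (hFd : DifferentiableAt ℝ F p)
    {u : Heis n → E} (hud : DifferentiableAt ℝ u (F p)) (k : Fin n) :
    Yop k (fun r => u (F r)) p
      = ∑ j, ((D0 F p (xH j) (yH k)) • Xop j u (F p)
          + (D0 F p (yH j) (yH k)) • Yop j u (F p)) := by
  rw [Yop_eq, chain_horiz hct hp hFd hud _ (alpha_vY k p)]
  apply Finset.sum_congr rfl; intro j _
  rw [D0_col_y hFd k (xH j), D0_col_y hFd k (yH j), hIdx_xH, hIdx_yH]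

/-- Differentiability of `W̃ u` for `u` which is `C²` on an open set. -/
lemma Wt_diff {U' : Set (Heis n)} (hU' : IsOpen U')
    {Wt : (Heis n → ℝ) → Heis n → ℝ}
    (hWt : Wt = Tvf ∨ (∃ j : Fin n, Wt = Xtilde j) ∨ (∃ j : Fin n, Wt = Ytilde j))
    {u : Heis n → ℝ} (hu : ContDiffOn ℝ 2 u U') {q : Heis n} (hq : q ∈ U') :
    DifferentiableAt ℝ (Wt u) q := by
  have hdf : DifferentiableAt ℝ (fderiv ℝ u) q :=
    (((hu.fderiv_of_isOpen hU' (m := 1) le_rfl) q hq).contDiffAt (hU'.mem_nhds hq)).differentiableAt one_ne_zero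
  have hpd : ∀ i : Fin (2*n+1), DifferentiableAt ℝ (fun r => pd i u r) q := by
    intro i
    exact (ContinuousLinearMap.apply ℝ ℝ
      ((Pi.single i 1 : Heis n))).differentiableAt.comp q hdf
  have hc : ∀ (c0 : ℝ) (i : Fin (2*n+1)), DifferentiableAt ℝ (fun r : Heis n => c0 * r i) q := by
    intro c0 i
    exact ((ContinuousLinearMap.proj (R := ℝ) (φ := fun _ : Fin (2*n+1) => ℝ)
      i).differentiableAt).const_mul c0
  rcases hWt with rfl | ⟨j, rfl⟩ | ⟨j, rfl⟩
  · exact hpd tIdx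
  · show DifferentiableAt ℝ (fun r => pd (xIdx j) u r + (2 * r (yIdx j)) • pd tIdx u r
      - (4 * r (yIdx j)) • pd tIdx u r) q
    exact ((hpd (xIdx j)).add ((hc 2 (yIdx j)).smul (hpd tIdx))).sub
      ((hc 4 (yIdx j)).smul (hpd tIdx))
  · show DifferentiableAt ℝ (fun r => pd (yIdx j) u r - (2 * r (xIdx j)) • pd tIdx u r
      + (4 * r (xIdx j)) • pd tIdx u r) q
    exact ((hpd (yIdx j)).sub ((hc 2 (xIdx j)).smul (hpd tIdx))).add
      ((hc 4 (xIdx j)).smul (hpd tIdx))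

lemma pd_ofReal {u : Heis n → ℝ} {p : Heis n} (hu : DifferentiableAt ℝ u p)
    (i : Fin (2*n+1)) :
    pd i (fun r => ((u r : ℝ) : ℂ)) p = ((pd i u p : ℝ) : ℂ) := by
  have h : HasFDerivAt (fun r => ((u r : ℝ) : ℂ))
      (Complex.ofRealCLM.comp (fderiv ℝ u p)) p :=
    Complex.ofRealCLM.hasFDerivAt.comp p hu.hasFDerivAt
  unfold pd; rw [h.fderiv]; rfl

lemma Xop_ofReal {u : Heis n → ℝ} {p : Heis n} (hu : DifferentiableAt ℝ u p) (j : Fin n) :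
    Xop j (fun r => ((u r : ℝ) : ℂ)) p = ((Xop j u p : ℝ) : ℂ) := by
  unfold Xop
  rw [pd_ofReal hu, pd_ofReal hu, Complex.real_smul]
  push_cast [smul_eq_mul]
  ring

lemma Yop_ofReal {u : Heis n → ℝ} {p : Heis n} (hu : DifferentiableAt ℝ u p) (j : Fin n) :
    Yop j (fun r => ((u r : ℝ) : ℂ)) p = ((Yop j u p : ℝ) : ℂ) := by
  unfold Yop
  rw [pd_ofReal hu, pd_ofReal hu, Complex.real_smul]
  push_cast [smul_eq_mul]
  ring

lemma pd_comb {u v : Heis n → ℝ} {q : Heis n} (hu : DifferentiableAt ℝ u q)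
    (hv : DifferentiableAt ℝ v q) (i : Fin (2*n+1)) :
    pd i (fun r => ((u r : ℝ) : ℂ) + Complex.I * ((v r : ℝ) : ℂ)) q
      = ((pd i u q : ℝ) : ℂ) + Complex.I * ((pd i v q : ℝ) : ℂ) := by
  have h : HasFDerivAt (fun r => ((u r : ℝ) : ℂ) + Complex.I * ((v r : ℝ) : ℂ))
      ((Complex.ofRealCLM.comp (fderiv ℝ u q))
        + Complex.I • (Complex.ofRealCLM.comp (fderiv ℝ v q))) q :=
    (Complex.ofRealCLM.hasFDerivAt.comp q hu.hasFDerivAt).add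
      ((Complex.ofRealCLM.hasFDerivAt.comp q hv.hasFDerivAt).const_mul Complex.I)
  unfold pd; rw [h.fderiv]
  simp [smul_eq_mul]

lemma Xop_comb {u v : Heis n → ℝ} {q : Heis n} (hu : DifferentiableAt ℝ u q)
    (hv : DifferentiableAt ℝ v q) (j : Fin n) :
    Xop j (fun r => ((u r : ℝ) : ℂ) + Complex.I * ((v r : ℝ) : ℂ)) q
      = ((Xop j u q : ℝ) : ℂ) + Complex.I * ((Xop j v q : ℝ) : ℂ) := by
  unfold Xop
  rw [pd_comb hu hv, pd_comb hu hv, Complex.real_smul]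
  push_cast [smul_eq_mul]
  ring

lemma Yop_comb {u v : Heis n → ℝ} {q : Heis n} (hu : DifferentiableAt ℝ u q)
    (hv : DifferentiableAt ℝ v q) (j : Fin n) :
    Yop j (fun r => ((u r : ℝ) : ℂ) + Complex.I * ((v r : ℝ) : ℂ)) q
      = ((Yop j u q : ℝ) : ℂ) + Complex.I * ((Yop j v q : ℝ) : ℂ) := by
  unfold Yop
  rw [pd_comb hu hv, pd_comb hu hv, Complex.real_smul]
  push_cast [smul_eq_mul]
  ring


lemma D0_row_x (Gf : Heis n → Heis n) (q : Heis n) (a : Fin (2*n)) (j : Fin n) :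
    D0 Gf q a (xH j) = Xop j (fun r => Gf r (hIdx a)) q := XYop_xH j _ _

lemma D0_row_y (Gf : Heis n → Heis n) (q : Heis n) (a : Fin (2*n)) (j : Fin n) :
    D0 Gf q a (yH j) = Yop j (fun r => Gf r (hIdx a)) q := XYop_yH j _ _

/-- `D₀G(F p) · D₀F(p) = 1`. -/
lemma NM_one {U U' : Set (Heis n)} (hU : IsOpen U) (hU' : IsOpen U')
    {F G : Heis n → Heis n} {lam : Heis n → ℝ}
    (hF : ContDiffOn ℝ 2 F U) (hG : ContDiffOn ℝ 2 G U')
    (hct : ∀ r ∈ U, ∀ v : Heis n, alphaForm (F r) (fderiv ℝ F r v) = lam r * alphaForm r v)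
    (hmaps : Set.MapsTo F U U') (hlinv : Set.LeftInvOn G F U)
    {p : Heis n} (hp : p ∈ U) : D0 G (F p) * D0 F p = 1 := by
  have hq : F p ∈ U' := hmaps hp
  have hFd : DifferentiableAt ℝ F p :=
    (hF.contDiffAt (hU.mem_nhds hp)).differentiableAt two_ne_zero
  have hGd : ∀ i : Fin (2*n+1), DifferentiableAt ℝ (fun r => G r i) (F p) := fun i =>
    (((ContinuousLinearMap.proj (R := ℝ) (φ := fun _ : Fin (2*n+1) => ℝ)
      i).contDiff.comp_contDiffOn hG).contDiffAt (hU'.mem_nhds hq)).differentiableAt two_ne_zero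
  ext a b
  have hcongr : (fun r => G (F r) (hIdx a)) =ᶠ[nhds p] (fun r => r (hIdx a)) := by
    filter_upwards [hU.mem_nhds hp] with r hr
    exact congrFun (hlinv hr) (hIdx a)
  rw [Matrix.mul_apply, sum_xy (fun m => D0 G (F p) a m * D0 F p m b),
    ← Finset.sum_add_distrib]
  rcases finH_cases b with ⟨kk, rfl⟩ | ⟨kk, rfl⟩
  · calc ∑ j, (D0 G (F p) a (xH j) * D0 F p (xH j) (xH kk)
          + D0 G (F p) a (yH j) * D0 F p (yH j) (xH kk))
        = ∑ j, ((D0 F p (xH j) (xH kk)) • Xop j (fun r => G r (hIdx a)) (F p)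
          + (D0 F p (yH j) (xH kk)) • Yop j (fun r => G r (hIdx a)) (F p)) := by
          apply Finset.sum_congr rfl; intro j _
          rw [D0_row_x G, D0_row_y G, smul_eq_mul, smul_eq_mul]
          ring
      _ = Xop kk (fun r => G (F r) (hIdx a)) p :=
          (chainX hct hp hFd (hGd (hIdx a)) kk).symm
      _ = Xop kk (fun r : Heis n => r (hIdx a)) p := Xop_congr hcongr kk
      _ = XYop (xH kk) (fun r : Heis n => r (hIdx a)) p := (XYop_xH kk _ _).symm
      _ = (1 : Matrix (Fin (2*n)) (Fin (2*n)) ℝ) a (xH kk) := XYop_coord a (xH kk) p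
  · calc ∑ j, (D0 G (F p) a (xH j) * D0 F p (xH j) (yH kk)
          + D0 G (F p) a (yH j) * D0 F p (yH j) (yH kk))
        = ∑ j, ((D0 F p (xH j) (yH kk)) • Xop j (fun r => G r (hIdx a)) (F p)
          + (D0 F p (yH j) (yH kk)) • Yop j (fun r => G r (hIdx a)) (F p)) := by
          apply Finset.sum_congr rfl; intro j _
          rw [D0_row_x G, D0_row_y G, smul_eq_mul, smul_eq_mul]
          ring
      _ = Yop kk (fun r => G (F r) (hIdx a)) p :=
          (chainY hct hp hFd (hGd (hIdx a)) kk).symm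
      _ = Yop kk (fun r : Heis n => r (hIdx a)) p := Yop_congr hcongr kk
      _ = XYop (yH kk) (fun r : Heis n => r (hIdx a)) p := (XYop_yH kk _ _).symm
      _ = (1 : Matrix (Fin (2*n)) (Fin (2*n)) ℝ) a (yH kk) := XYop_coord a (yH kk) p

/-- Both `D₀F` and `D₀G∘F` commute with `J`. -/
lemma Jcomm {U U' : Set (Heis n)} (hU : IsOpen U) (hU' : IsOpen U')
    {F G : Heis n → Heis n} {lam : Heis n → ℝ}
    (hF : ContDiffOn ℝ 2 F U) (hG : ContDiffOn ℝ 2 G U')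
    (hconf : IsConformal U F lam)
    (hmaps : Set.MapsTo F U U') (hlinv : Set.LeftInvOn G F U) (hn : 0 < n)
    {p : Heis n} (hp : p ∈ U) :
    Jmat n * D0 F p = D0 F p * Jmat n ∧
      Jmat n * D0 G (F p) = D0 G (F p) * Jmat n := by
  obtain ⟨⟨hlampos, hct⟩, hJ0, hMM⟩ := hconf
  have hμ : 0 < J0 F p ^ (1/(n:ℝ)) := Real.rpow_pos_of_pos (hJ0 p hp) _
  have hS := symp_matrix hU hF hct hp
  have hM := conf_symp_comm hn (D0 F p) _ (lam p) hμ (hlampos p hp) (hMM p hp) hS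
  have hnm := NM_one hU hU' hF hG hct hmaps hlinv hp
  exact ⟨hM, J_comm_inv (D0 F p) (D0 G (F p)) (mul_eq_one_comm.mp hnm) hnm hM⟩

lemma pd_constMul {w : Heis n → ℂ} {p : Heis n} (hw : DifferentiableAt ℝ w p) (c : ℂ)
    (i : Fin (2*n+1)) : pd i (fun r => c * w r) p = c * pd i w p := by
  unfold pd
  rw [fderiv_const_mul hw c]
  simp

lemma Xop_constMul {w : Heis n → ℂ} {p : Heis n} (hw : DifferentiableAt ℝ w p) (c : ℂ)
    (j : Fin n) : Xop j (fun r => c * w r) p = c * Xop j w p := by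
  unfold Xop
  rw [pd_constMul hw, pd_constMul hw, Complex.real_smul, Complex.real_smul]
  ring

lemma Yop_constMul {w : Heis n → ℂ} {p : Heis n} (hw : DifferentiableAt ℝ w p) (c : ℂ)
    (j : Fin n) : Yop j (fun r => c * w r) p = c * Yop j w p := by
  unfold Yop
  rw [pd_constMul hw, pd_constMul hw, Complex.real_smul, Complex.real_smul]
  ring

end Aux5

end


/-- Let `F : U → U'` be a `C²` conformal diffeomorphism with inverse `G`,
and let `W̃` be one of `X̃_1,…,X̃_n, Ỹ_1,…,Ỹ_n, T`. If a `C²` function `ψ : U → ℝ`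
satisfies `(W̃ g_ℓ) ∘ F = X_{n+ℓ} ψ` and `(W̃ g_{n+ℓ}) ∘ F = -X_ℓ ψ` on `U` for every
`ℓ = 1,…,n`, then `Z_k Z_ℓ ψ = 0` on `U` for all `1 ≤ k,ℓ ≤ n`. -/
theorem potential_gives_ZZ_zero {n : ℕ}
    (U U' : Set (Heis n)) (hU : IsOpen U) (hU' : IsOpen U')
    (hUconn : IsConnected U) (hU'conn : IsConnected U')
    (F G : Heis n → Heis n) (lam : Heis n → ℝ)
    (hF : ContDiffOn ℝ 2 F U) (hG : ContDiffOn ℝ 2 G U')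
    (hbij : Set.BijOn F U U') (hinv : Set.InvOn G F U U')
    (hconf : IsConformal U F lam)
    (Wt : (Heis n → ℝ) → Heis n → ℝ)
    (hWt : Wt = Tvf ∨ (∃ j : Fin n, Wt = Xtilde j) ∨ (∃ j : Fin n, Wt = Ytilde j))
    (ψ : Heis n → ℝ) (hψ : ContDiffOn ℝ 2 ψ U)
    (hpot : ∀ ℓ : Fin n, ∀ p ∈ U,
      Wt (fun r => G r (xIdx ℓ)) (F p) = Yop ℓ ψ p ∧
      Wt (fun r => G r (yIdx ℓ)) (F p) = -Xop ℓ ψ p) :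
    ∀ k ℓ : Fin n, ∀ p ∈ U, Zop k (Zop ℓ (fun q => (ψ q : ℂ))) p = 0 := by
  intro k ℓ p hp
  have hct := hconf.1.2
  have hn : 0 < n := Nat.lt_of_le_of_lt (Nat.zero_le _) k.2
  have hq : F p ∈ U' := hbij.mapsTo hp
  have hFd : DifferentiableAt ℝ F p :=
    (hF.contDiffAt (hU.mem_nhds hp)).differentiableAt two_ne_zero
  have hGcomp : ∀ i : Fin (2*n+1), ContDiffOn ℝ 2 (fun r => G r i) U' := fun i =>
    (ContinuousLinearMap.proj (R := ℝ) (φ := fun _ : Fin (2*n+1) => ℝ)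
      i).contDiff.comp_contDiffOn hG
  set gx : Heis n → ℝ := fun r => G r (xIdx ℓ) with hgxdef
  set gy : Heis n → ℝ := fun r => G r (yIdx ℓ) with hgydef
  have hgxC : ContDiffOn ℝ 2 gx U' := hGcomp (xIdx ℓ)
  have hgyC : ContDiffOn ℝ 2 gy U' := hGcomp (yIdx ℓ)
  -- the W̃-transferred CR relations for G at F p
  have hNrel : ∀ b : Fin n,
      Wt (Xop b gy) (F p) = - Wt (Yop b gx) (F p) ∧
      Wt (Yop b gy) (F p) = Wt (Xop b gx) (F p) := by
    intro b
    have hrel : ∀ q' ∈ U',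
        Xop b gy q' = - Yop b gx q' ∧ Yop b gy q' = Xop b gx q' := by
      intro q' hq'
      obtain ⟨p', hp', rfl⟩ := hbij.surjOn hq'
      have hcm := (Jcomm hU hU' hF hG hconf hbij.mapsTo hinv.1 hn hp').2
      have hce := comm_entries hcm ℓ b
      constructor
      · have h1 := hce.1
        rw [D0_row_x G, D0_row_y G, hIdx_yH, hIdx_xH] at h1
        exact h1
      · have h2 := hce.2
        rw [D0_row_y G, D0_row_x G, hIdx_yH, hIdx_xH] at h2
        exact h2
    constructor
    · have h1 : (Xop b gy : Heis n → ℝ) =ᶠ[nhds (F p)]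
          (fun q' => - Yop b gx q') := by
        filter_upwards [hU'.mem_nhds hq] with q' hq'
        exact (hrel q' hq').1
      rw [Wt_congr hWt h1, Wt_neg hWt]
    · have h2 : (Yop b gy : Heis n → ℝ) =ᶠ[nhds (F p)] (Xop b gx : Heis n → ℝ) := by
        filter_upwards [hU'.mem_nhds hq] with q' hq'
        exact (hrel q' hq').2
      rw [Wt_congr hWt h2]
  -- CR relations for F at p
  have hMrel := fun (j : Fin n) => comm_entries
    (Jcomm hU hU' hF hG hconf hbij.mapsTo hinv.1 hn hp).1 j k
  -- step 1: the first layer via the potential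
  have hψd : ∀ p' ∈ U, DifferentiableAt ℝ ψ p' := fun p' hp' =>
    (hψ.contDiffAt (hU.mem_nhds hp')).differentiableAt two_ne_zero
  have hZl : (fun p' => Zop ℓ (fun r => ((ψ r : ℝ) : ℂ)) p') =ᶠ[nhds p]
      (fun p' => (-(1/2) : ℂ) * (((Wt gy (F p') : ℝ) : ℂ)
        + Complex.I * ((Wt gx (F p') : ℝ) : ℂ))) := by
    filter_upwards [hU.mem_nhds hp] with p' hp'
    have h1 := (hpot ℓ p' hp').1
    have h2 := (hpot ℓ p' hp').2
    unfold Zop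
    rw [Xop_ofReal (hψd p' hp') ℓ, Yop_ofReal (hψd p' hp') ℓ,
      show Xop ℓ ψ p' = -(Wt gy (F p')) from by rw [h2]; ring,
      show Yop ℓ ψ p' = Wt gx (F p') from h1.symm]
    push_cast
    ring
  -- differentiability of the complex combination
  have hWgx : DifferentiableAt ℝ (Wt gx) (F p) := Wt_diff hU' hWt hgxC hq
  have hWgy : DifferentiableAt ℝ (Wt gy) (F p) := Wt_diff hU' hWt hgyC hq
  set cl : Heis n → ℂ := fun q' => ((Wt gy q' : ℝ) : ℂ) + Complex.I * ((Wt gx q' : ℝ) : ℂ)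
    with hcldef
  have hcld : DifferentiableAt ℝ cl (F p) :=
    (Complex.ofRealCLM.differentiableAt.comp (F p) hWgy).add
      ((Complex.ofRealCLM.differentiableAt.comp (F p) hWgx).const_mul Complex.I)
  have hcfd : DifferentiableAt ℝ (fun r => cl (F r)) p := hcld.comp p hFd
  -- step 2: outer derivative
  have hout : Zop k (Zop ℓ (fun q0 => ((ψ q0 : ℝ) : ℂ))) p
      = (-(1/2) : ℂ) * ((1/2 : ℂ) * (Xop k (fun r => cl (F r)) p
          - Complex.I * Yop k (fun r => cl (F r)) p)) := by
    show (1/2 : ℂ) * (Xop k (fun p' => Zop ℓ (fun r => ((ψ r : ℝ) : ℂ)) p') p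
      - Complex.I * Yop k (fun p' => Zop ℓ (fun r => ((ψ r : ℝ) : ℂ)) p') p) = _
    rw [Xop_congr hZl k, Yop_congr hZl k]
    have e : (fun p' => (-(1/2) : ℂ) * (((Wt gy (F p') : ℝ) : ℂ)
        + Complex.I * ((Wt gx (F p') : ℝ) : ℂ))) = fun r => (-(1/2) : ℂ) * cl (F r) := rfl
    rw [e, Xop_constMul hcfd, Yop_constMul hcfd]
    ring
  -- step 3: chain rule for cl ∘ F
  have hXc := chainX hct hp hFd hcld k
  have hYc := chainY hct hp hFd hcld k
  -- step 4: identify the horizontal derivatives of cl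
  have hgxCA : ContDiffAt ℝ 2 gx (F p) := hgxC.contDiffAt (hU'.mem_nhds hq)
  have hgyCA : ContDiffAt ℝ 2 gy (F p) := hgyC.contDiffAt (hU'.mem_nhds hq)
  have hA : ∀ j : Fin n, Xop j cl (F p)
      = ((- Wt (Yop j gx) (F p) : ℝ) : ℂ) + Complex.I * ((Wt (Xop j gx) (F p) : ℝ) : ℂ) := by
    intro j
    rw [hcldef, Xop_comb hWgy hWgx j,
      show Xop j (Wt gy) (F p) = Wt (Xop j gy) (F p) from (Wt_comm hWt ℓ hgyCA j).1,
      show Xop j (Wt gx) (F p) = Wt (Xop j gx) (F p) from (Wt_comm hWt ℓ hgxCA j).1,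
      (hNrel j).1]
  have hB : ∀ j : Fin n, Yop j cl (F p)
      = ((Wt (Xop j gx) (F p) : ℝ) : ℂ) + Complex.I * ((Wt (Yop j gx) (F p) : ℝ) : ℂ) := by
    intro j
    rw [hcldef, Yop_comb hWgy hWgx j,
      show Yop j (Wt gy) (F p) = Wt (Yop j gy) (F p) from (Wt_comm hWt ℓ hgyCA j).2,
      show Yop j (Wt gx) (F p) = Wt (Yop j gx) (F p) from (Wt_comm hWt ℓ hgxCA j).2,
      (hNrel j).2]
  -- step 5: the sum vanishes
  have hsum : Xop k (fun r => cl (F r)) p - Complex.I * Yop k (fun r => cl (F r)) p = 0 := by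
    rw [hXc, hYc, Finset.mul_sum, ← Finset.sum_sub_distrib]
    apply Finset.sum_eq_zero
    intro j _
    rw [hA j, hB j, (hMrel j).1, (hMrel j).2]
    rw [Complex.real_smul, Complex.real_smul, Complex.real_smul, Complex.real_smul]
    push_cast
    linear_combination (-(((D0 F p (xH j) (xH k) : ℝ) : ℂ) * ((Wt (Yop j gx) (F p) : ℝ) : ℂ))
      - ((Wt (Xop j gx) (F p) : ℝ) : ℂ) * ((D0 F p (xH j) (yH k) : ℝ) : ℂ)) * Complex.I_sq
  rw [hout, hsum]
  ring
end
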